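/- arXiv:2604.11330 — 6 statements merged into one kernel-verified Lean document; each statement's English description precedes it below -/
import Mathlib

section
/- Let k ≥ 1 and let π : G → H be a homomorphism of finite abelian groups (written additively), and set X = {g ∈ G : ord(g) ∤ k and ord(π(g)) ∣ k}. Suppose ℓ is a prime such that ker π is an ℓ-group. Let G′ and H′ be the Sylow ℓ-subgroups of G and H respectively, let π′ : G′ → H′ be the restriction of π, and set X′ = {s ∈ G′ : ord(s) ∤ k and ord(π′(s)) ∣ k}. Then X ≠ ∅ ⟺ X′ ≠ ∅ ⟺ (ker π′) ∩ ℓʳG′ ≠ {0}, where r = ν_ℓ(k) is the ℓ-adic valuation of k. -/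
/-- Let `k ≥ 1`, `π : G → H` a homomorphism of finite abelian groups with
`ker π` an `ℓ`-group for a prime `ℓ`.  Let `G′`, `H′` be the Sylow `ℓ`-subgroups
(`ℓ`-primary components) of `G`, `H`, and `π′ : G′ → H′` the restriction of `π`.  With
`X = {g ∈ G : ord(g) ∤ k, ord(π(g)) ∣ k}` and `X′` defined analogously for `π′`, and
`r = ν_ℓ(k)`, we have `X ≠ ∅ ⟺ X′ ≠ ∅ ⟺ (ker π′) ∩ ℓʳG′ ≠ {0}`. -/
theorem X_nonempty_iff_X'_nonempty_iff
    {G H : Type*} [AddCommGroup G] [AddCommGroup H] [Finite G] [Finite H]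
    (k : ℕ) (hk : 1 ≤ k) (ℓ : ℕ) (hℓ : ℓ.Prime) (π : G →+ H)
    (hker : ∀ g ∈ π.ker, ∃ n : ℕ, addOrderOf g = ℓ ^ n)
    (G' : AddSubgroup G) (H' : AddSubgroup H)
    (hG' : ∀ g : G, g ∈ G' ↔ ∃ n : ℕ, addOrderOf g = ℓ ^ n)
    (hH' : ∀ h : H, h ∈ H' ↔ ∃ n : ℕ, addOrderOf h = ℓ ^ n)
    (π' : G' →+ H') (hπ' : ∀ s : G', ((π' s : H)) = π (s : G)) :
    ((∃ g : G, ¬ addOrderOf g ∣ k ∧ addOrderOf (π g) ∣ k) ↔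
       (∃ s : G', ¬ addOrderOf s ∣ k ∧ addOrderOf (π' s) ∣ k)) ∧
    ((∃ s : G', ¬ addOrderOf s ∣ k ∧ addOrderOf (π' s) ∣ k) ↔
       π'.ker ⊓ (nsmulAddMonoidHom (ℓ ^ (k.factorization ℓ)) : G' →+ G').range ≠ ⊥) := by
  have hk0 : k ≠ 0 := by omega
  set r := k.factorization ℓ with hr
  have hℓ1 : 1 < ℓ := hℓ.one_lt
  -- key equivalence for elements of G'
  have key : ∀ s : G', (¬ addOrderOf s ∣ k ∧ addOrderOf (π' s) ∣ k) ↔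
      ((ℓ ^ r) • s ≠ 0 ∧ (ℓ ^ r) • s ∈ π'.ker) := by
    intro s
    obtain ⟨a, ha⟩ := (hG' (s : G)).mp s.2
    rw [AddSubgroup.addOrderOf_coe] at ha
    obtain ⟨c, hc⟩ := (hH' (π' s : H)).mp (π' s).2
    rw [AddSubgroup.addOrderOf_coe] at hc
    have h1 : ¬ addOrderOf s ∣ k ↔ (ℓ ^ r) • s ≠ 0 := by
      rw [not_iff_not, ← addOrderOf_dvd_iff_nsmul_eq_zero, ha,
        hℓ.pow_dvd_iff_le_factorization hk0,
        Nat.pow_dvd_pow_iff_le_right hℓ1]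
    have h2 : addOrderOf (π' s) ∣ k ↔ (ℓ ^ r) • s ∈ π'.ker := by
      rw [AddMonoidHom.mem_ker, map_nsmul, ← addOrderOf_dvd_iff_nsmul_eq_zero, hc,
        hℓ.pow_dvd_iff_le_factorization hk0,
        Nat.pow_dvd_pow_iff_le_right hℓ1]
    rw [h1, h2]
  constructor
  · constructor
    · rintro ⟨g, hg1, hg2⟩
      -- pass to the ℓ-part of g
      set n := addOrderOf g with hn
      have hn0 : n ≠ 0 := (addOrderOf_pos g).ne'
      set a := n.factorization ℓ with hadef
      set b := ordCompl[ℓ] n with hb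
      have hb0 : 0 < b := Nat.ordCompl_pos ℓ hn0
      have hbn : b ∣ n := Nat.ordCompl_dvd n ℓ
      have hmul : ℓ ^ a * b = n := Nat.ordProj_mul_ordCompl_eq_self n ℓ
      have hcop : Nat.Coprime ℓ b := Nat.coprime_ordCompl hℓ hn0
      -- order of b • g is ℓ^a
      have hords : addOrderOf (b • g) = ℓ ^ a := by
        rw [addOrderOf_nsmul, ← hn, Nat.gcd_eq_right hbn]
        exact Nat.div_eq_of_eq_mul_left hb0 (by rw [← hmul, mul_comm])
      -- b divides addOrderOf (π g)
      set m := addOrderOf (π g) with hm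
      have hmker : m • g ∈ π.ker := by
        rw [AddMonoidHom.mem_ker, map_nsmul, hm, addOrderOf_nsmul_eq_zero]
      obtain ⟨c, hc⟩ := hker _ hmker
      have hzero : (ℓ ^ c * m) • g = 0 := by
        rw [mul_smul, ← hc, addOrderOf_nsmul_eq_zero]
      have hdvd : n ∣ ℓ ^ c * m := addOrderOf_dvd_of_nsmul_eq_zero hzero
      have hbm : b ∣ m := (Nat.Coprime.dvd_of_dvd_mul_left
        ((hcop.pow_left c).symm) (hbn.trans hdvd))
      -- r < a
      have hra : r < a := by
        by_contra hra
        push_neg at hra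
        apply hg1
        rw [show n = ℓ ^ a * b from hmul.symm]
        exact Nat.Coprime.mul_dvd_of_dvd_of_dvd (hcop.pow_left a)
          ((hℓ.pow_dvd_iff_le_factorization hk0).mpr hra) (hbm.trans hg2)
      -- package b • g as an element of G'
      have hmem : b • g ∈ G' := (hG' _).mpr ⟨a, hords⟩
      refine ⟨⟨b • g, hmem⟩, ?_, ?_⟩
      · rw [← AddSubgroup.addOrderOf_coe, AddSubgroup.coe_mk, hords]
        intro hdk
        have := (hℓ.pow_dvd_iff_le_factorization hk0).mp hdk
        omega
      · rw [← AddSubgroup.addOrderOf_coe, hπ', AddSubgroup.coe_mk, map_nsmul]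
        exact (addOrderOf_smul_dvd b).trans hg2
    · rintro ⟨s, hs1, hs2⟩
      refine ⟨(s : G), ?_, ?_⟩
      · rwa [AddSubgroup.addOrderOf_coe]
      · rwa [← hπ', AddSubgroup.addOrderOf_coe]
  · rw [ne_eq, AddSubgroup.eq_bot_iff_forall]
    push_neg
    constructor
    · rintro ⟨s, hs⟩
      obtain ⟨hs0, hsk⟩ := (key s).mp hs
      exact ⟨(ℓ ^ r) • s, AddSubgroup.mem_inf.mpr
        ⟨hsk, ⟨s, by simp [nsmulAddMonoidHom_apply]⟩⟩, hs0⟩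
    · rintro ⟨x, hx, hx0⟩
      obtain ⟨hxk, s, hsx⟩ := AddSubgroup.mem_inf.mp hx
      rw [nsmulAddMonoidHom_apply] at hsx
      subst hsx
      exact ⟨s, (key s).mpr ⟨hx0, hxk⟩⟩
end

section
/- Let ℓ be a prime, k ≥ 1, and r = ν_ℓ(k) the ℓ-adic valuation of k. Let f : G → H be a surjective homomorphism of finite abelian ℓ-groups (written additively) whose kernel is cyclic of order ℓ, and set X = {g ∈ G : ord(g) ∤ k and ord(f(g)) ∣ k}. Then X ≠ ∅ if and only if |G/ℓʳG| = |H/ℓʳH|. -/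
/-- Let `ℓ` be a prime, `k ≥ 1`, `r = ν_ℓ(k)`.  If `f : G → H` is a
surjective homomorphism of finite abelian `ℓ`-groups whose kernel is cyclic of order `ℓ`,
and `X = {g ∈ G : ord(g) ∤ k, ord(f(g)) ∣ k}`, then `X ≠ ∅ ⟺ |G/ℓʳG| = |H/ℓʳH|`. -/
theorem X_nonempty_iff_card_quotients_eq
    {G H : Type*} [AddCommGroup G] [AddCommGroup H] [Finite G] [Finite H]
    (ℓ : ℕ) (hℓ : ℓ.Prime) (k : ℕ) (hk : 1 ≤ k)
    (hG : ∀ g : G, ∃ n : ℕ, addOrderOf g = ℓ ^ n)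
    (hH : ∀ h : H, ∃ n : ℕ, addOrderOf h = ℓ ^ n)
    (f : G →+ H) (hf : Function.Surjective f)
    (hcyc : IsAddCyclic f.ker) (hcard : Nat.card f.ker = ℓ) :
    (∃ g : G, ¬ addOrderOf g ∣ k ∧ addOrderOf (f g) ∣ k) ↔
      Nat.card (G ⧸ (nsmulAddMonoidHom (ℓ ^ (k.factorization ℓ)) : G →+ G).range) =
        Nat.card (H ⧸ (nsmulAddMonoidHom (ℓ ^ (k.factorization ℓ)) : H →+ H).range) := by
  classical
  set N : ℕ := ℓ ^ (k.factorization ℓ) with hN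
  set SG : AddSubgroup G := (nsmulAddMonoidHom N : G →+ G).range with hSG
  set SH : AddSubgroup H := (nsmulAddMonoidHom N : H →+ H).range with hSH
  have hk0 : k ≠ 0 := by omega
  have hNk : N ∣ k := Nat.ordProj_dvd k ℓ
  have hGdvd : ∀ g : G, addOrderOf g ∣ k ↔ N • g = 0 := by
    intro g
    obtain ⟨n, hn⟩ := hG g
    rw [← addOrderOf_dvd_iff_nsmul_eq_zero, hn, hN]
    constructor
    · intro h
      exact pow_dvd_pow ℓ ((Nat.Prime.pow_dvd_iff_le_factorization hℓ hk0).1 h)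
    · intro h
      exact h.trans hNk
  have hHdvd : ∀ h : H, addOrderOf h ∣ k ↔ N • h = 0 := by
    intro x
    obtain ⟨n, hn⟩ := hH x
    rw [← addOrderOf_dvd_iff_nsmul_eq_zero, hn, hN]
    constructor
    · intro h
      exact pow_dvd_pow ℓ ((Nat.Prime.pow_dvd_iff_le_factorization hℓ hk0).1 h)
    · intro h
      exact h.trans hNk
  -- Step 1: LHS ↔ ker f ⊓ SG ≠ ⊥
  have step1 : (∃ g : G, ¬ addOrderOf g ∣ k ∧ addOrderOf (f g) ∣ k) ↔ ¬ (f.ker ⊓ SG = ⊥) := by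
    rw [AddSubgroup.eq_bot_iff_forall]
    push_neg
    constructor
    · rintro ⟨g, hg1, hg2⟩
      refine ⟨N • g, ?_, fun h => hg1 ((hGdvd g).2 h)⟩
      rw [AddSubgroup.mem_inf]
      refine ⟨?_, ⟨g, rfl⟩⟩
      rw [AddMonoidHom.mem_ker, map_nsmul]
      exact (hHdvd (f g)).1 hg2
    · rintro ⟨x, hx, hx0⟩
      rw [AddSubgroup.mem_inf] at hx
      obtain ⟨hxker, g, hg⟩ := hx
      have hg' : N • g = x := hg
      refine ⟨g, fun h => hx0 (hg' ▸ (hGdvd g).1 h), ?_⟩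
      rw [hHdvd]
      rw [← map_nsmul, hg']
      exact hxker
  -- Step 2: ker f ⊓ SG ≠ ⊥ ↔ its card is ℓ
  have hdvd : Nat.card ↥(f.ker ⊓ SG) ∣ ℓ := hcard ▸ AddSubgroup.card_dvd_of_le inf_le_left
  have step2 : ¬ (f.ker ⊓ SG = ⊥) ↔ Nat.card ↥(f.ker ⊓ SG) = ℓ := by
    constructor
    · intro hne
      rcases hℓ.eq_one_or_self_of_dvd _ hdvd with h | h
      · exact absurd (AddSubgroup.card_eq_one.mp h) hne
      · exact h
    · intro h hbot
      have h1 : Nat.card ↥(f.ker ⊓ SG) = 1 := AddSubgroup.card_eq_one.mpr hbot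
      exact hℓ.ne_one (h.symm.trans h1)
  -- Cardinality relations
  have cG : Nat.card G = Nat.card (G ⧸ SG) * Nat.card SG :=
    AddSubgroup.card_eq_card_quotient_mul_card_addSubgroup SG
  have cH : Nat.card H = Nat.card (H ⧸ SH) * Nat.card SH :=
    AddSubgroup.card_eq_card_quotient_mul_card_addSubgroup SH
  have cGH : Nat.card G = Nat.card H * ℓ := by
    have e := QuotientAddGroup.quotientKerEquivOfSurjective f hf
    rw [AddSubgroup.card_eq_card_quotient_mul_card_addSubgroup f.ker, hcard,
      Nat.card_congr e.toEquiv]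
  have hmap : SG.map f = SH := by
    ext y
    simp only [hSG, hSH, AddSubgroup.mem_map, AddMonoidHom.mem_range, nsmulAddMonoidHom_apply]
    constructor
    · rintro ⟨x, ⟨g, rfl⟩, rfl⟩
      exact ⟨f g, (map_nsmul f N g).symm⟩
    · rintro ⟨h, rfl⟩
      obtain ⟨g, rfl⟩ := hf h
      exact ⟨N • g, ⟨g, rfl⟩, map_nsmul f N g⟩
  have cS : Nat.card SG = Nat.card SH * Nat.card ↥(f.ker ⊓ SG) := by
    set φ := f.addSubgroupMap SG with hφ
    have hsurj : Function.Surjective φ := f.addSubgroupMap_surjective SG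
    have e1 : Nat.card (↥SG ⧸ φ.ker) = Nat.card SH := by
      rw [Nat.card_congr (QuotientAddGroup.quotientKerEquivOfSurjective φ hsurj).toEquiv, hmap]
    have e2 : Nat.card ↥φ.ker = Nat.card ↥(f.ker ⊓ SG) := by
      refine Nat.card_congr ⟨fun x => ⟨x.1.1, ?_⟩, fun x => ⟨⟨x.1, x.2.2⟩, ?_⟩, ?_, ?_⟩
      · have hx := x.2
        rw [AddMonoidHom.mem_ker] at hx
        have hfx : f x.1.1 = 0 := congrArg Subtype.val hx
        exact AddSubgroup.mem_inf.2 ⟨AddMonoidHom.mem_ker.2 hfx, x.1.2⟩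
      · have hx := x.2
        rw [AddSubgroup.mem_inf] at hx
        rw [AddMonoidHom.mem_ker]
        exact Subtype.ext (AddMonoidHom.mem_ker.1 hx.1)
      · intro x; ext; rfl
      · intro x; ext; rfl
    rw [AddSubgroup.card_eq_card_quotient_mul_card_addSubgroup φ.ker, e1, e2]
  -- Final arithmetic
  rw [step1, step2]
  set d := Nat.card ↥(f.ker ⊓ SG) with hd
  have hq1 : 0 < Nat.card (G ⧸ SG) := Nat.card_pos
  have hq2 : 0 < Nat.card (H ⧸ SH) := Nat.card_pos
  have hs2 : 0 < Nat.card SH := Nat.card_pos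
  have key : Nat.card (G ⧸ SG) * d = Nat.card (H ⧸ SH) * ℓ := by
    have h1 : Nat.card (G ⧸ SG) * (Nat.card SH * d) = Nat.card (H ⧸ SH) * Nat.card SH * ℓ := by
      rw [← cS, ← cG, ← cH, cGH]
    have h2 : (Nat.card (G ⧸ SG) * d) * Nat.card SH = (Nat.card (H ⧸ SH) * ℓ) * Nat.card SH := by
      ring_nf
      ring_nf at h1
      linarith [h1]
    exact Nat.eq_of_mul_eq_mul_right hs2 h2
  constructor
  · intro h
    rw [h] at key
    exact Nat.eq_of_mul_eq_mul_right hℓ.pos key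
  · intro h
    rw [h] at key
    exact Nat.eq_of_mul_eq_mul_left hq2 key
end

section
/- Let 0 → κ → S →^{φ} S₀ → 0 be a short exact sequence of finite abelian 2-groups. If the sequence splits (i.e., φ admits a group-homomorphism right inverse), then |S[2]| = |S₀[2]|·|κ[2]|. Conversely, if |S[2]| = |S₀[2]|·|κ[2]| and moreover κ has no element of order 4 or S₀ has no element of order 4, then the sequence splits. -/
/-- The 2-torsion subgroup. -/
private def twoTorsion (A : Type*) [AddCommGroup A] : AddSubgroup A where
  carrier := {x | 2 • x = 0}
  zero_mem' := by simp
  add_mem' := by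
    intro a b ha hb
    simp only [Set.mem_setOf_eq] at *
    rw [smul_add, ha, hb, add_zero]
  neg_mem' := by
    intro a ha
    simp only [Set.mem_setOf_eq] at *
    rw [smul_neg, ha, neg_zero]

private lemma card_eq_range_mul_ker {A B : Type*} [AddCommGroup A] [AddCommGroup B] [Finite A]
    (f : A →+ B) : Nat.card A = Nat.card f.range * Nat.card f.ker := by
  rw [AddSubgroup.card_eq_card_quotient_mul_card_addSubgroup f.ker,
    Nat.card_congr (QuotientAddGroup.quotientKerEquivRange f).toEquiv]

private lemma two_nsmul_eq_zero_of_no_four {A : Type*} [AddCommGroup A] [Finite A]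
    (h2 : ∀ x : A, ∃ n : ℕ, addOrderOf x = 2 ^ n) (h4 : ∀ x : A, addOrderOf x ≠ 4) (x : A) :
    2 • x = 0 := by
  obtain ⟨n, hn⟩ := h2 x
  rw [← addOrderOf_dvd_iff_nsmul_eq_zero, hn]
  by_contra hdvd
  have hn2 : 2 ≤ n := by
    by_contra hlt
    interval_cases n <;> simp_all
  refine h4 (2 ^ (n - 2) • x) ?_
  rw [addOrderOf_nsmul, hn, Nat.gcd_eq_right (pow_dvd_pow 2 (by omega)),
    Nat.pow_div (by omega) (by norm_num), show n - (n - 2) = 2 by omega]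

private lemma zmod_hom_ext {n : ℕ} [NeZero n] {A : Type*} [AddCommGroup A]
    {f g : ZMod n →+ A} (h : f 1 = g 1) : f = g := by
  ext y
  have hy : y = y.val • (1 : ZMod n) := by
    rw [nsmul_eq_mul, mul_one, ZMod.natCast_val, ZMod.cast_id]
  rw [hy, map_nsmul, map_nsmul, h]

/-- Let `0 → κ → S → S₀ → 0` be a short exact sequence of finite abelian
`2`-groups (`κ` realised as the kernel of the surjection `φ : S → S₀`).  If the sequence
splits then `|S[2]| = |S₀[2]|·|κ[2]|`; conversely, if `|S[2]| = |S₀[2]|·|κ[2]|` and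
moreover `κ` has no element of order `4` or `S₀` has no element of order `4`,
then the sequence splits. -/
theorem split_iff_two_torsion_card
    {S S₀ : Type*} [AddCommGroup S] [AddCommGroup S₀] [Finite S] [Finite S₀]
    (hS : ∀ x : S, ∃ n : ℕ, addOrderOf x = 2 ^ n)
    (hS₀ : ∀ x : S₀, ∃ n : ℕ, addOrderOf x = 2 ^ n)
    (φ : S →+ S₀) (hφ : Function.Surjective φ) :
    ((∃ σ : S₀ →+ S, φ.comp σ = AddMonoidHom.id S₀) →
      Nat.card {x : S // 2 • x = 0} =
        Nat.card {x : S₀ // 2 • x = 0} * Nat.card {x : φ.ker // 2 • x = 0}) ∧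
    ((Nat.card {x : S // 2 • x = 0} =
        Nat.card {x : S₀ // 2 • x = 0} * Nat.card {x : φ.ker // 2 • x = 0}) →
      ((∀ x : φ.ker, addOrderOf x ≠ 4) ∨ (∀ x : S₀, addOrderOf x ≠ 4)) →
      (∃ σ : S₀ →+ S, φ.comp σ = AddMonoidHom.id S₀)) := by
  classical
  set ψ : (twoTorsion S) →+ (twoTorsion S₀) :=
    AddMonoidHom.codRestrict (φ.comp (twoTorsion S).subtype) (twoTorsion S₀)
      (fun x => by
        have hx : 2 • (x : S) = 0 := x.2
        show 2 • φ (x : S) = 0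
        rw [← map_nsmul, hx, map_zero]) with hψ
  have e1 : Nat.card {x : S // 2 • x = 0} = Nat.card (twoTorsion S) :=
    Nat.card_congr (Equiv.subtypeEquivRight fun x => Iff.rfl)
  have e2 : Nat.card {x : S₀ // 2 • x = 0} = Nat.card (twoTorsion S₀) :=
    Nat.card_congr (Equiv.subtypeEquivRight fun x => Iff.rfl)
  have e3 : Nat.card {x : φ.ker // 2 • x = 0} = Nat.card ψ.ker := by
    apply Nat.card_congr
    refine ⟨fun x => ⟨⟨x.1.1, congrArg Subtype.val x.2⟩,
        AddMonoidHom.mem_ker.mpr (Subtype.ext x.1.2)⟩,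
      fun y => ⟨⟨y.1.1, congrArg Subtype.val (AddMonoidHom.mem_ker.mp y.2)⟩,
        Subtype.ext y.1.2⟩, fun x => rfl, fun y => rfl⟩
  have hcard : Nat.card (twoTorsion S) = Nat.card ψ.range * Nat.card ψ.ker :=
    card_eq_range_mul_ker ψ
  constructor
  · rintro ⟨σ, hσ⟩
    have hsurj : Function.Surjective ψ := by
      rintro ⟨y, hy⟩
      have hy' : 2 • y = 0 := hy
      refine ⟨⟨σ y, ?_⟩, ?_⟩
      · show 2 • σ y = 0
        rw [← map_nsmul, hy', map_zero]
      · exact Subtype.ext (DFunLike.congr_fun hσ y)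
    have htop : ψ.range = ⊤ := AddMonoidHom.range_eq_top.mpr hsurj
    rw [e1, e2, e3, hcard, htop]
    congr 1
    exact Nat.card_congr AddSubgroup.topEquiv.toEquiv
  · intro hcardeq hcase
    have hkpos : 0 < Nat.card ψ.ker := Nat.card_pos
    rw [e1, e2, e3] at hcardeq
    have hr : Nat.card ψ.range = Nat.card (twoTorsion S₀) :=
      Nat.eq_of_mul_eq_mul_right hkpos (by rw [← hcard, hcardeq])
    have hrtop : ψ.range = ⊤ := AddSubgroup.eq_top_of_card_eq _ hr
    have hsurj2 : ∀ y : S₀, 2 • y = 0 → ∃ x : S, 2 • x = 0 ∧ φ x = y := by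
      intro y hy
      have hmem : (⟨y, hy⟩ : twoTorsion S₀) ∈ ψ.range := hrtop ▸ AddSubgroup.mem_top _
      obtain ⟨x, hx⟩ := hmem
      exact ⟨x.1, x.2, congrArg Subtype.val hx⟩
    -- every element of S₀ lifts to an element of S of the same (or dividing) order
    have key : ∀ x₀ : S₀, ∃ s : S, φ s = x₀ ∧ addOrderOf x₀ • s = 0 := by
      intro x₀
      obtain ⟨m, hm⟩ := hS₀ x₀
      rcases Nat.eq_zero_or_pos m with rfl | hmpos
      · refine ⟨0, ?_, smul_zero _⟩
        rw [map_zero]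
        exact (AddMonoid.addOrderOf_eq_one_iff.mp (by rw [hm]; norm_num)).symm
      · rcases hcase with hκ | h4
        · -- κ has no element of order 4
          have hker2 : ∀ z : S, φ z = 0 → 2 • z = 0 := by
            intro z hz
            have h2' : ∀ w : φ.ker, ∃ n : ℕ, addOrderOf w = 2 ^ n := by
              intro w
              obtain ⟨n, hn⟩ := hS w.1
              exact ⟨n, by rw [← AddSubgroup.addOrderOf_coe, hn]⟩
            have := two_nsmul_eq_zero_of_no_four h2' hκ (⟨z, hz⟩ : φ.ker)
            exact congrArg Subtype.val this
          have h2m : 2 * 2 ^ (m - 1) = 2 ^ m := by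
            conv_rhs => rw [show m = (m - 1) + 1 by omega]
            rw [pow_succ, mul_comm]
          have hy : 2 • (2 ^ (m - 1) • x₀) = 0 := by
            rw [smul_smul, h2m, ← hm, addOrderOf_nsmul_eq_zero]
          obtain ⟨t, ht2, htφ⟩ := hsurj2 _ hy
          obtain ⟨s, hs⟩ := hφ x₀
          have hkmem : φ (2 ^ (m - 1) • s - t) = 0 := by
            rw [map_sub, map_nsmul, hs, htφ, sub_self]
          have h2k := hker2 _ hkmem
          rw [smul_sub, ht2, sub_zero] at h2k
          refine ⟨s, hs, ?_⟩
          rw [hm, ← h2m, mul_smul, h2k]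
        · -- S₀ has no element of order 4
          have h2x : 2 • x₀ = 0 := two_nsmul_eq_zero_of_no_four hS₀ h4 x₀
          obtain ⟨t, ht2, htφ⟩ := hsurj2 x₀ h2x
          refine ⟨t, htφ, ?_⟩
          rw [← addOrderOf_dvd_iff_nsmul_eq_zero] at ht2 ⊢
          exact ht2.trans (by rw [hm]; exact dvd_pow_self 2 (by omega))
    obtain ⟨ι, hι, n, hn1, ⟨e⟩⟩ := AddCommGroup.equiv_directSum_zmod_of_finite' S₀
    set x : ι → S₀ := fun i => e.symm (DirectSum.of (fun i => ZMod (n i)) i 1) with hxdef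
    have hxord : ∀ i, addOrderOf (x i) = n i := by
      intro i
      show addOrderOf (e.symm (DirectSum.of (fun i => ZMod (n i)) i 1)) = n i
      rw [AddEquiv.addOrderOf_eq,
        addOrderOf_injective (DirectSum.of (fun i => ZMod (n i)) i) (DirectSum.of_injective i),
        ZMod.addOrderOf_one]
    choose s hs1 hs2 using fun i => key (x i)
    have hNeZero : ∀ i, NeZero (n i) := fun i => ⟨by have := hn1 i; omega⟩
    have hlift : ∀ i, (zmultiplesHom S (s i)) ((n i : ℤ)) = 0 := by
      intro i
      show ((n i : ℤ)) • s i = 0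
      rw [natCast_zsmul, ← hxord i]
      exact hs2 i
    set σ' : (DirectSum ι fun i => ZMod (n i)) →+ S :=
      DirectSum.toAddMonoid (fun i => ZMod.lift (n i) ⟨zmultiplesHom S (s i), hlift i⟩) with hσ'
    have hcomp : φ.comp σ' = AddEquiv.toAddMonoidHom e.symm := by
      apply DirectSum.addHom_ext'
      intro i
      have := hNeZero i
      apply zmod_hom_ext
      show φ (σ' (DirectSum.of (fun i => ZMod (n i)) i 1)) = e.symm (DirectSum.of _ i 1)
      rw [hσ', DirectSum.toAddMonoid_of]
      have h1 : (ZMod.lift (n i) ⟨zmultiplesHom S (s i), hlift i⟩) 1 = s i := by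
        have h := ZMod.lift_coe (n i) ⟨zmultiplesHom S (s i), hlift i⟩ 1
        simpa using h
      rw [h1]
      exact hs1 i
    refine ⟨σ'.comp e.toAddMonoidHom, ?_⟩
    ext y
    show φ (σ' (e y)) = y
    have h := DFunLike.congr_fun hcomp (e y)
    simpa using h
end

section
/- Let ℓ be a prime, K an imaginary quadratic field in which ℓ is ramified, and d ≥ 1. Assume that either ℓ = 2 and D_K ≡ 12 (mod 16), or ℓ = 3 and D_K ≡ 6 (mod 9). Then λ_d, the cokernel of the natural homomorphism (ℤ/ℓ^dℤ)ˣ → (O_K/ℓ^dO_K)ˣ, is isomorphic to ℤ/ℓ^{d−1}ℤ × ℤ/ℓℤ. -/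
open NumberField


lemma zmod_isUnit_of_not_dvd {ℓ : ℕ} (d : ℕ) (hℓ : ℓ.Prime) {m : ℤ} (h : ¬ (ℓ:ℤ) ∣ m) :
    IsUnit (m : ZMod (ℓ^d)) := by
  have hp : Prime (ℓ:ℤ) := Int.prime_iff_natAbs_prime.mpr (by simpa using hℓ)
  have hcop : IsCoprime ((ℓ:ℤ)^d) m := (hp.coprime_iff_not_dvd.2 h).pow_left
  obtain ⟨u, v, huv⟩ := hcop
  apply IsUnit.of_mul_eq_one ((v : ZMod (ℓ^d)))
  have h2 := congrArg (fun z : ℤ => (z : ZMod (ℓ^d))) huv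
  simp only [Int.cast_add, Int.cast_mul, Int.cast_one, Int.cast_pow] at h2
  have h3 : ((ℓ:ℤ) : ZMod (ℓ^d))^d = 0 := by
    have h4 : (((ℓ^d : ℕ)) : ZMod (ℓ^d)) = 0 := ZMod.natCast_self _
    push_cast at h4
    exact_mod_cast h4
  rw [h3, mul_zero, zero_add] at h2
  rw [mul_comm] at h2
  exact h2

lemma not_dvd_of_zmod_isUnit {ℓ : ℕ} {d : ℕ} (hℓ : ℓ.Prime) (hd : 1 ≤ d) {m : ℤ}
    (h : IsUnit (m : ZMod (ℓ^d))) : ¬ (ℓ:ℤ) ∣ m := by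
  intro hdvd
  obtain ⟨k, hk⟩ := hdvd
  rw [hk] at h
  push_cast at h
  have h2 : IsUnit ((ℓ : ZMod (ℓ^d))) := isUnit_of_mul_isUnit_left h
  haveI : Fact (1 < ℓ^d) := ⟨Nat.one_lt_pow (by omega) hℓ.one_lt⟩
  have h3 : IsNilpotent ((ℓ : ZMod (ℓ^d))) := by
    refine ⟨d, ?_⟩
    have : (((ℓ^d : ℕ)) : ZMod (ℓ^d)) = 0 := ZMod.natCast_self _
    push_cast at this
    exact this
  exact h3.not_isUnit h2

lemma grp_aux {G : Type*} [CommGroup G] [Finite G] {ℓ e : ℕ} (hℓ : ℓ.Prime)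
    (hcard : Nat.card G = ℓ ^ (e + 1)) (g : G) (hg : orderOf g = ℓ ^ e)
    (hexp : e = 0 ∨ ∀ x : G, x ^ ℓ ^ e = 1) :
    Nonempty (G ≃* Multiplicative (ZMod (ℓ ^ e) × ZMod ℓ)) := by
  have hℓ1 : 1 < ℓ := hℓ.one_lt
  set H := Subgroup.zpowers g with hHdef
  have hH : Nat.card H = ℓ ^ e := by rw [Nat.card_zpowers, hg]
  have hcards := Subgroup.card_eq_card_quotient_mul_card_subgroup H
  rw [hcard, hH] at hcards
  have hQ : Nat.card (G ⧸ H) = ℓ := by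
    have hpos : 0 < ℓ ^ e := pow_pos hℓ.pos e
    have h : ℓ ^ (e + 1) = ℓ * ℓ ^ e := by ring
    rw [h] at hcards
    exact (Nat.eq_of_mul_eq_mul_right hpos hcards.symm)
  obtain ⟨x, hx⟩ : ∃ x : G, x ∉ H := by
    by_contra h
    push_neg at h
    have : H = ⊤ := by ext y; simpa using h y
    rw [this, Subgroup.card_top, hcard] at hH
    have := Nat.pow_right_injective hℓ.two_le hH
    omega
  have hxl : x ^ ℓ ∈ H := by
    have h1 : ((x : G ⧸ H)) ^ ℓ = 1 := by
      rw [← hQ]; exact pow_card_eq_one'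
    have h2 : ((x ^ ℓ : G) : G ⧸ H) = 1 := by rw [← h1]; rfl
    exact (QuotientGroup.eq_one_iff _).1 h2
  obtain ⟨m', hm'⟩ : ∃ m' : ℤ, x ^ (ℓ : ℤ) = g ^ ((ℓ : ℤ) * m') := by
    obtain ⟨m, hm⟩ := Subgroup.mem_zpowers_iff.1 hxl
    rcases hexp with he0 | hexp
    · subst he0
      have hg1 : g = 1 := orderOf_eq_one_iff.1 (by simpa using hg)
      refine ⟨0, ?_⟩
      have h2 : x ^ ℓ = 1 := by
        rw [hHdef, hg1, Subgroup.zpowers_one_eq_bot, Subgroup.mem_bot] at hxl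
        exact hxl
      rw [zpow_natCast, h2, hg1, one_zpow]
    · rcases Nat.eq_zero_or_pos e with he0 | hepos
      · exfalso
        apply hx
        have hx1 : x = 1 := by simpa [he0] using hexp x
        rw [hx1]; exact Subgroup.one_mem H
      · have h1 : g ^ (m * (ℓ : ℤ) ^ (e - 1)) = 1 := by
          rw [zpow_mul, hm]
          have h2 : (x ^ ℓ) ^ ((ℓ:ℤ) ^ (e-1)) = x ^ ((ℓ ^ e : ℕ) : ℤ) := by
            rw [← zpow_natCast x ℓ, ← zpow_mul]
            congr 1
            push_cast
            rw [← pow_succ']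
            congr 1
            omega
          rw [h2, zpow_natCast]
          exact hexp x
        have h2 : ((ℓ : ℤ) ^ e) ∣ m * (ℓ : ℤ) ^ (e - 1) := by
          have h3 := orderOf_dvd_iff_zpow_eq_one.2 h1
          rw [hg] at h3
          exact_mod_cast h3
        have h3 : (ℓ : ℤ) ∣ m := by
          have he : (ℓ:ℤ) ^ e = (ℓ:ℤ) ^ (e-1) * ℓ := by
            rw [← pow_succ]; congr 1; omega
          rw [he] at h2
          rcases h2 with ⟨u, hu⟩
          have hne : ((ℓ:ℤ) ^ (e-1)) ≠ 0 := pow_ne_zero _ (by exact_mod_cast hℓ.ne_zero)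
          refine ⟨u, ?_⟩
          apply mul_left_cancel₀ hne
          rw [mul_comm ((ℓ:ℤ)^(e-1)) m] at *
          linarith [hu]
        obtain ⟨m'', hmm⟩ := h3
        refine ⟨m'', ?_⟩
        rw [← hmm, hm, zpow_natCast]
  -- define h
  set h : G := x * (g ^ m')⁻¹ with hhdef
  have hhl : h ^ (ℓ : ℤ) = 1 := by
    rw [hhdef, mul_zpow, inv_zpow, ← zpow_mul, mul_comm m' (ℓ:ℤ), hm', mul_inv_eq_one]
  have hhH : h ∉ H := by
    intro hmem
    apply hx
    have : x = h * g ^ m' := by rw [hhdef]; group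
    rw [this]
    exact H.mul_mem hmem (Subgroup.zpow_mem _ (Subgroup.mem_zpowers g) m')
  -- additive homs
  have hge : g ^ ((ℓ ^ e : ℕ) : ℤ) = 1 := by
    rw [zpow_natCast, ← hg, pow_orderOf_eq_one]
  let a : Additive G := Additive.ofMul g
  let b : Additive G := Additive.ofMul h
  have ha : (zmultiplesHom (Additive G) a) ((ℓ ^ e : ℕ) : ℤ) = 0 := by
    show ((ℓ ^ e : ℕ) : ℤ) • a = 0
    rw [← ofMul_zpow, hge]; rfl
  have hb : (zmultiplesHom (Additive G) b) ((ℓ : ℕ) : ℤ) = 0 := by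
    show ((ℓ : ℕ) : ℤ) • b = 0
    rw [← ofMul_zpow, hhl]; rfl
  let f₁ : ZMod (ℓ ^ e) →+ Additive G := ZMod.lift (ℓ ^ e) ⟨zmultiplesHom (Additive G) a, ha⟩
  let f₂ : ZMod ℓ →+ Additive G := ZMod.lift ℓ ⟨zmultiplesHom (Additive G) b, hb⟩
  let φ : ZMod (ℓ ^ e) × ZMod ℓ →+ Additive G := f₁.coprod f₂
  have hφ : ∀ (i j : ℤ), φ ((i : ZMod (ℓ ^ e)), (j : ZMod ℓ)) = Additive.ofMul (g ^ i * h ^ j) := by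
    intro i j
    show f₁ (i : ZMod (ℓ ^ e)) + f₂ (j : ZMod ℓ) = _
    rw [ZMod.lift_coe, ZMod.lift_coe]
    show i • a + j • b = _
    rw [← ofMul_zpow, ← ofMul_zpow]
    rfl
  have hsurj : Function.Surjective φ := by
    intro y
    have hordh : orderOf ((h : G ⧸ H)) = ℓ := by
      have hne : ((h : G ⧸ H)) ≠ 1 := by
        rw [Ne, QuotientGroup.eq_one_iff]; exact hhH
      have hdvd : orderOf ((h : G ⧸ H)) ∣ ℓ := by
        rw [← hQ]; exact orderOf_dvd_natCard _
      rcases (Nat.Prime.eq_one_or_self_of_dvd hℓ _ hdvd) with h1 | h1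
      · exact absurd (orderOf_eq_one_iff.1 h1) hne
      · exact h1
    have hgen : ∃ j : ℤ, ((Additive.toMul y : G) : G ⧸ H) = ((h : G ⧸ H)) ^ j := by
      have htop : Subgroup.zpowers ((h : G ⧸ H)) = ⊤ := by
        apply Subgroup.eq_top_of_card_eq
        rw [Nat.card_zpowers, hordh, hQ]
      have : ((Additive.toMul y : G) : G ⧸ H) ∈ Subgroup.zpowers ((h : G ⧸ H)) := by
        rw [htop]; trivial
      obtain ⟨j, hj⟩ := Subgroup.mem_zpowers_iff.1 this
      exact ⟨j, hj.symm⟩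
    obtain ⟨j, hj⟩ := hgen
    have hmem : (Additive.toMul y : G) * (h ^ j)⁻¹ ∈ H := by
      rw [← QuotientGroup.eq_one_iff]
      push_cast
      rw [QuotientGroup.mk_mul, QuotientGroup.mk_inv, QuotientGroup.mk_zpow]
      rw [← hj]
      group
    obtain ⟨i, hi⟩ := Subgroup.mem_zpowers_iff.1 hmem
    refine ⟨((i : ZMod (ℓ ^ e)), (j : ZMod ℓ)), ?_⟩
    rw [hφ i j]
    have : g ^ i * h ^ j = Additive.toMul y := by
      rw [hi]; group
    rw [this]
    rfl
  have hbij : Function.Bijective φ := by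
    haveI : NeZero (ℓ ^ e) := ⟨pow_ne_zero _ hℓ.ne_zero⟩
    haveI : NeZero ℓ := ⟨hℓ.ne_zero⟩
    rw [Nat.bijective_iff_surjective_and_card]
    refine ⟨hsurj, ?_⟩
    rw [Nat.card_prod, Nat.card_zmod, Nat.card_zmod]
    have : Nat.card (Additive G) = Nat.card G := rfl
    rw [this, hcard]
    ring
  exact ⟨(AddEquiv.toMultiplicativeLeft (AddEquiv.ofBijective φ hbij)).symm⟩

noncomputable def unitsEquivSubtype {M : Type*} [Monoid M] : Mˣ ≃ {x : M // IsUnit x} where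
  toFun u := ⟨u, u.isUnit⟩
  invFun x := x.2.unit
  left_inv u := Units.ext u.isUnit.unit_spec
  right_inv x := Subtype.ext x.2.unit_spec

lemma count_units_aux {R : Type*} [CommRing R] {n : ℕ} [NeZero n]
    (E : (ZMod n × ZMod n) ≃ R) (w : ZMod n)
    (hcrit : ∀ p : ZMod n × ZMod n, IsUnit (E p) ↔ IsUnit (p.1 + w * p.2)) :
    Nat.card Rˣ = n.totient * n := by
  haveI : Finite R := Finite.of_equiv _ E
  let T : (ZMod n × ZMod n) ≃ (ZMod n × ZMod n) :=
    { toFun := fun p => (p.1 + w * p.2, p.2)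
      invFun := fun q => (q.1 - w * q.2, q.2)
      left_inv := by intro p; ext <;> simp
      right_inv := by intro q; ext <;> simp }
  let e1 : Rˣ ≃ {x : R // IsUnit x} := unitsEquivSubtype
  let e2 : {p : ZMod n × ZMod n // IsUnit (E p)} ≃ {x : R // IsUnit x} :=
    E.subtypeEquiv (fun a => Iff.rfl)
  let e3 : {p : ZMod n × ZMod n // IsUnit (E p)} ≃ {p : ZMod n × ZMod n // IsUnit (p.1 + w * p.2)} :=
    Equiv.subtypeEquivRight (fun p => by rw [hcrit p])
  let e4 : {p : ZMod n × ZMod n // IsUnit (p.1 + w * p.2)} ≃ {q : ZMod n × ZMod n // IsUnit q.1} :=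
    T.subtypeEquiv (fun p => Iff.rfl)
  let e5 : {q : ZMod n × ZMod n // IsUnit q.1} ≃ {x : ZMod n // IsUnit x} × ZMod n :=
    { toFun := fun q => (⟨q.1.1, q.2⟩, q.1.2)
      invFun := fun p => ⟨(p.1.1, p.2), p.1.2⟩
      left_inv := by intro q; rfl
      right_inv := by intro p; rfl }
  have h1 : Nat.card Rˣ = Nat.card ({x : ZMod n // IsUnit x} × ZMod n) := by
    exact Nat.card_congr (e1.trans (e2.symm.trans (e3.trans (e4.trans e5))))
  rw [h1, Nat.card_prod, Nat.card_zmod]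
  have h2 : Nat.card {x : ZMod n // IsUnit x} = Nat.card (ZMod n)ˣ :=
    Nat.card_congr unitsEquivSubtype.symm
  rw [h2]
  have h3 : Nat.card (ZMod n)ˣ = n.totient := by
    rw [Nat.card_eq_fintype_card, ZMod.card_units_eq_totient]
  rw [h3]

lemma core_assemble {R : Type*} [CommRing R] {ℓ d : ℕ} (hℓ : ℓ.Prime) (hd : 1 ≤ d)
    (f : ZMod (ℓ ^ d) →+* R) [Finite R]
    (hcardu : Nat.card Rˣ = (ℓ^d).totient * ℓ ^ d)
    (hinj : Function.Injective (Units.map f.toMonoidHom))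
    (hmain : 2 ≤ d → (∃ g : (Rˣ ⧸ (Units.map f.toMonoidHom).range), orderOf g = ℓ^(d-1)) ∧
      ∀ u : Rˣ, u ^ ℓ ^ (d-1) ∈ (Units.map f.toMonoidHom).range) :
    Nonempty ((Rˣ ⧸ (Units.map f.toMonoidHom).range) ≃*
      Multiplicative (ZMod (ℓ ^ (d - 1)) × ZMod ℓ)) := by
  haveI : NeZero (ℓ^d) := ⟨pow_ne_zero _ hℓ.ne_zero⟩
  set N := (Units.map f.toMonoidHom).range with hN
  have hcardN : Nat.card N = (ℓ^d).totient := by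
    have : Nat.card N = Nat.card (ZMod (ℓ^d))ˣ :=
      (Nat.card_congr (MonoidHom.ofInjective hinj).toEquiv).symm
    rw [this, Nat.card_eq_fintype_card, ZMod.card_units_eq_totient]
  have hcardQ : Nat.card (Rˣ ⧸ N) = ℓ ^ d := by
    have h := Subgroup.card_eq_card_quotient_mul_card_subgroup N
    rw [hcardu, hcardN] at h
    have hpos : 0 < (ℓ^d).totient := Nat.totient_pos.2 (pow_pos hℓ.pos d)
    rw [mul_comm ((ℓ^d).totient) (ℓ^d)] at h
    exact (Nat.eq_of_mul_eq_mul_right hpos h.symm)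
  have hd1 : d - 1 + 1 = d := by omega
  rcases Nat.lt_or_ge d 2 with hd2 | hd2
  · -- d = 1
    have hd1' : d = 1 := by omega
    subst hd1'
    exact grp_aux (e := 1 - 1) hℓ (by simpa using hcardQ) (1 : Rˣ ⧸ N) (by simp) (Or.inl rfl)
  · obtain ⟨⟨g, hg⟩, hexp⟩ := hmain hd2
    refine grp_aux hℓ (by rw [hd1]; exact hcardQ) g hg (Or.inr ?_)
    intro x
    obtain ⟨u, rfl⟩ := QuotientGroup.mk_surjective x
    have : ((u ^ ℓ ^ (d-1) : Rˣ) : Rˣ ⧸ N) = 1 := (QuotientGroup.eq_one_iff _).2 (hexp u)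
    rw [← this]
    rfl

lemma core {R : Type*} [CommRing R] {ℓ d : ℕ} (hℓ : ℓ.Prime) (hd : 1 ≤ d)
    (f : ZMod (ℓ ^ d) →+* R) (ρ : R) (c : ℤ)
    (hρ : ρ ^ 2 = (c : R))
    (hcc : (ℓ = 2 ∧ c % 4 = 3) ∨ (ℓ = 3 ∧ c % 9 = 6))
    (hrep : ∀ r : R, ∃ x y : ℤ, r = (x : R) + (y : R) * ρ)
    (huniq : ∀ x y : ℤ, (x : R) + (y : R) * ρ = 0 → ((ℓ:ℤ) ^ d ∣ x ∧ (ℓ:ℤ) ^ d ∣ y)) :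
    Nonempty ((Rˣ ⧸ (Units.map f.toMonoidHom).range) ≃*
      Multiplicative (ZMod (ℓ ^ (d - 1)) × ZMod ℓ)) := by
  haveI : NeZero (ℓ^d) := ⟨pow_ne_zero _ hℓ.ne_zero⟩
  have hpow0 : (((ℓ:ℤ)^d : ℤ) : R) = 0 := by
    have h1 : ((((ℓ:ℤ)^d : ℤ)) : ZMod (ℓ^d)) = 0 := by
      rw [ZMod.intCast_zmod_eq_zero_iff_dvd]
      exact_mod_cast dvd_rfl
    calc (((ℓ:ℤ)^d : ℤ) : R) = f ((((ℓ:ℤ)^d : ℤ)) : ZMod (ℓ^d)) := (map_intCast f _).symm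
    _ = 0 := by rw [h1, map_zero]
  have huniq0 : ∀ x : ℤ, (x : R) = 0 → (ℓ:ℤ)^d ∣ x := fun x hx => (huniq x 0 (by simpa using hx)).1
  haveI : Nontrivial R := by
    refine ⟨⟨1, 0, fun h01 => ?_⟩⟩
    have h1 := huniq0 1 (by simpa using h01)
    have h2 : (ℓ:ℤ)^d ≤ 1 := Int.le_of_dvd one_pos h1
    have h3 : (2:ℤ) ≤ (ℓ:ℤ) := by exact_mod_cast hℓ.two_le
    have h4 : (2:ℤ)^d ≤ (ℓ:ℤ)^d := pow_le_pow_left₀ (by norm_num) h3 d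
    have h5 : (2:ℤ) ≤ (2:ℤ)^d := le_self_pow₀ (by norm_num) (by omega)
    omega
  have hfval : ∀ a : ZMod (ℓ^d), f a = ((a.val : ℤ) : R) := by
    intro a
    conv_lhs => rw [← ZMod.natCast_rightInverse a]
    rw [map_natCast]
    push_cast
    ring
  have hinjf : Function.Injective f := by
    intro a b hab
    have h0 : f (a - b) = 0 := by rw [map_sub, hab, sub_self]
    rw [hfval] at h0
    have hdvd := huniq0 _ h0
    have hdvd' : ℓ^d ∣ (a-b).val := by exact_mod_cast hdvd
    have hlt : (a-b).val < ℓ^d := ZMod.val_lt _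
    have hz : (a - b).val = 0 := Nat.eq_zero_of_dvd_of_lt hdvd' hlt
    have hz2 : a - b = 0 := by rwa [ZMod.val_eq_zero] at hz
    exact sub_eq_zero.1 hz2
  have mem_range_of : ∀ (u : Rˣ) (n : ℤ), ¬ (ℓ:ℤ) ∣ n → (u : R) = (n : R) →
      u ∈ (Units.map f.toMonoidHom).range := by
    intro u n hn hu
    have hun : IsUnit ((n : ZMod (ℓ^d))) := zmod_isUnit_of_not_dvd d hℓ hn
    refine ⟨hun.unit, Units.ext ?_⟩
    show f ((hun.unit : ZMod (ℓ^d))) = (u : R)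
    rw [hun.unit_spec, map_intCast, hu]
  have range_val : ∀ u : Rˣ, u ∈ (Units.map f.toMonoidHom).range → ∃ n : ℤ, (u : R) = (n : R) := by
    rintro u ⟨w, hw⟩
    refine ⟨((w : ZMod (ℓ^d)).val : ℤ), ?_⟩
    rw [← hw]
    show f ((w : ZMod (ℓ^d))) = _
    rw [hfval]
  have hNmul : ∀ x y : ℤ, ((x:R)+(y:R)*ρ) * ((x:R)-(y:R)*ρ) = ((x^2 - c*y^2 : ℤ) : R) := by
    intro x y
    push_cast
    linear_combination (-((y:R)^2)) * hρ
  have hunit_of_N : ∀ x y : ℤ, ¬ (ℓ:ℤ) ∣ (x^2 - c*y^2) → IsUnit ((x:R)+(y:R)*ρ) := by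
    intro x y hN
    have hu := zmod_isUnit_of_not_dvd d hℓ hN
    obtain ⟨v, hv⟩ := isUnit_iff_exists_inv.1 hu
    apply IsUnit.of_mul_eq_one (((x:R)-(y:R)*ρ) * f v)
    rw [← mul_assoc, hNmul x y, ← map_intCast f (x^2 - c*y^2), ← map_mul, hv, map_one]
  -- the representation equivalence
  have hEbij : Function.Bijective (fun p : ZMod (ℓ^d) × ZMod (ℓ^d) => f p.1 + f p.2 * ρ) := by
    constructor
    · intro p q hpq
      simp only at hpq
      rw [hfval, hfval, hfval, hfval] at hpq
      have h0 : (((p.1.val:ℤ) - (q.1.val:ℤ) : ℤ) : R) + (((p.2.val:ℤ) - (q.2.val:ℤ) : ℤ) : R) * ρ = 0 := by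
        push_cast at hpq ⊢
        linear_combination hpq
      obtain ⟨h1, h2⟩ := huniq _ _ h0
      have e1 : p.1 = q.1 := by
        have hz : (((p.1.val:ℤ) - (q.1.val:ℤ) : ℤ) : ZMod (ℓ^d)) = 0 := by
          rw [ZMod.intCast_zmod_eq_zero_iff_dvd]
          exact_mod_cast h1
        push_cast at hz
        rw [ZMod.natCast_rightInverse p.1, ZMod.natCast_rightInverse q.1, sub_eq_zero] at hz
        exact hz
      have e2 : p.2 = q.2 := by
        have hz : (((p.2.val:ℤ) - (q.2.val:ℤ) : ℤ) : ZMod (ℓ^d)) = 0 := by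
          rw [ZMod.intCast_zmod_eq_zero_iff_dvd]
          exact_mod_cast h2
        push_cast at hz
        rw [ZMod.natCast_rightInverse p.2, ZMod.natCast_rightInverse q.2, sub_eq_zero] at hz
        exact hz
      exact Prod.ext e1 e2
    · intro r
      obtain ⟨x, y, hxy⟩ := hrep r
      refine ⟨((x : ZMod (ℓ^d)), (y : ZMod (ℓ^d))), ?_⟩
      simp only
      rw [map_intCast, map_intCast, hxy]
  let E : (ZMod (ℓ^d) × ZMod (ℓ^d)) ≃ R := Equiv.ofBijective _ hEbij
  have hEdef : ∀ p, E p = f p.1 + f p.2 * ρ := fun p => rfl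
  haveI : Finite R := Finite.of_equiv _ E
  have hinjU : Function.Injective (Units.map f.toMonoidHom) := Units.map_injective hinjf
  -- square key
  have key2 : ∀ x y : ℤ, ((x:R)+(y:R)*ρ)^2 = ((x^2 + c*y^2 : ℤ):R) + ((2*(x*y) : ℤ):R)*ρ := by
    intro x y
    push_cast
    linear_combination ((y:R)^2) * hρ
  rcases hcc with ⟨hl, hc⟩ | ⟨hl, hc⟩
  · -- ℓ = 2
    subst hl
    have hcodd : ¬ (2:ℤ) ∣ c := by omega
    have hprime2 : Prime (2:ℤ) := Int.prime_two
    have hsq : ∀ x : ℤ, ¬(2:ℤ)∣x → ¬(2:ℤ)∣x^2 := fun x hx hd' => hx (hprime2.dvd_of_dvd_pow hd')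
    have hcy : ∀ y : ℤ, ¬(2:ℤ)∣y → ¬(2:ℤ)∣(c*y^2) := by
      intro y hy hd'
      rcases hprime2.dvd_mul.1 hd' with h4 | h4
      · exact hcodd h4
      · exact hy (hprime2.dvd_of_dvd_pow h4)
    have hNodd : ∀ x y : ℤ, ¬(2:ℤ)∣(x+y) →
        (¬ (2:ℤ)∣(x^2 - c*y^2) ∧ ¬(2:ℤ)∣(x^2+c*y^2) ∧ (2:ℤ)∣(x*y)) := by
      intro x y h
      rcases (show ((2:ℤ)∣x ∧ ¬(2:ℤ)∣y) ∨ (¬(2:ℤ)∣x ∧ (2:ℤ)∣y) by omega) with ⟨hx, hy⟩ | ⟨hx, hy⟩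
      · have h1 : (2:ℤ)∣x^2 := dvd_pow hx (by norm_num)
        have h2 := hcy y hy
        exact ⟨by omega, by omega, dvd_mul_of_dvd_left hx y⟩
      · have h1 := hsq x hx
        have h2 : (2:ℤ)∣(c*y^2) := Dvd.dvd.mul_left (dvd_pow hy (by norm_num)) c
        exact ⟨by omega, by omega, dvd_mul_of_dvd_right hy x⟩
    have hnotunit : ∀ x y : ℤ, (2:ℤ)∣(x+y) → ¬ IsUnit ((x:R)+(y:R)*ρ) := by
      intro x y h hU
      have h1 : (2:ℤ) ∣ (x^2 + c*y^2) := by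
        rcases (show ((2:ℤ)∣x ∧ (2:ℤ)∣y) ∨ (¬(2:ℤ)∣x ∧ ¬(2:ℤ)∣y) by omega) with ⟨hx,hy⟩|⟨hx,hy⟩
        · have h2 : (2:ℤ)∣x^2 := dvd_pow hx (by norm_num)
          have h3 : (2:ℤ)∣(c*y^2) := Dvd.dvd.mul_left (dvd_pow hy (by norm_num)) c
          omega
        · have h2 := hsq x hx
          have h3 := hcy y hy
          omega
      obtain ⟨A, hA⟩ := h1
      have hA' : ((x:R))^2 + (c:R)*((y:R))^2 = 2*(A:R) := by
        have := congrArg (fun z : ℤ => (z : R)) hA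
        push_cast at this
        linear_combination this
      have hz2 : ((x:R)+(y:R)*ρ)^2 = 2 * ((A:R) + ((x*y : ℤ):R) * ρ) := by
        push_cast
        linear_combination ((y:R)^2) * hρ + hA'
      have h2d : ((2:R))^d = 0 := by
        have h5 := hpow0
        push_cast at h5
        exact h5
      have hnil : IsNilpotent ((x:R)+(y:R)*ρ) := by
        refine ⟨2*d, ?_⟩
        rw [pow_mul, hz2, mul_pow, h2d, zero_mul]
      exact hnil.not_isUnit hU
    have hunit_iff : ∀ x y : ℤ, IsUnit ((x:R)+(y:R)*ρ) ↔ ¬(2:ℤ)∣(x+y) :=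
      fun x y => ⟨fun h hd' => hnotunit x y hd' h, fun h => hunit_of_N x y (hNodd x y h).1⟩
    -- step formula
    have step2 : ∀ (x y : ℤ) (k : ℕ), ((x:R) + ((2^(k+1)*y : ℤ):R)*ρ)^2
        = ((x^2 + c*2^(2*k+2)*y^2 : ℤ):R) + ((2^(k+2)*(x*y) : ℤ):R)*ρ := by
      intro x y k
      push_cast
      ring_nf
      linear_combination ((2:R)^(2*k+2)*(y:R)^2) * hρ

    have pow2 : ∀ k : ℕ, ∀ x y : ℤ, ¬(2:ℤ)∣(x+y) →
        ∃ A B : ℤ, (¬(2:ℤ)∣A) ∧ ((x:R)+(y:R)*ρ)^(2^(k+1)) = (A:R) + ((2^(k+2)*B : ℤ):R)*ρ := by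
      intro k
      induction k with
      | zero =>
        intro x y h
        obtain ⟨hN1, hN2, hxy⟩ := hNodd x y h
        obtain ⟨B, hB⟩ := hxy
        refine ⟨x^2 + c*y^2, B, hN2, ?_⟩
        rw [pow_one, key2]
        congr 3
        omega
      | succ k ih =>
        intro x y h
        obtain ⟨A, B, hA, hAB⟩ := ih x y h
        refine ⟨A^2 + c*2^(2*(k+1)+2)*B^2, A*B, ?_, ?_⟩
        · have h1 := hsq A hA
          have h2 : (2:ℤ) ∣ c*2^(2*(k+1)+2)*B^2 := ⟨c*2^(2*(k+1)+1)*B^2, by ring⟩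
          omega
        · have hh : (2:ℕ)^(k+1+1) = 2^(k+1) * 2 := by ring
          rw [hh, pow_mul, hAB]
          exact step2 A B (k+1)
    have ord2 : ∀ k : ℕ, ∃ A B : ℤ, (¬(2:ℤ)∣A) ∧ (¬(2:ℤ)∣B) ∧
        ((1:R)+(2:R)*ρ)^(2^k) = (A:R) + ((2^(k+1)*B : ℤ):R)*ρ := by
      intro k
      induction k with
      | zero =>
        refine ⟨1, 1, by norm_num, by norm_num, ?_⟩
        push_cast
        ring
      | succ k ih =>
        obtain ⟨A, B, hA, hB, hAB⟩ := ih
        refine ⟨A^2 + c*2^(2*k+2)*B^2, A*B, ?_, ?_, ?_⟩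
        · have h1 := hsq A hA
          have h2 : (2:ℤ) ∣ c*2^(2*k+2)*B^2 := ⟨c*2^(2*k+1)*B^2, by ring⟩
          omega
        · intro hd'
          rcases hprime2.dvd_mul.1 hd' with h4|h4
          exacts [hA h4, hB h4]
        · have hh : (2:ℕ)^(k+1) = 2^k * 2 := by ring
          rw [hh, pow_mul, hAB]
          exact step2 A B k
    -- build via core_assemble
    have hcrit : ∀ p : ZMod (2^d) × ZMod (2^d),
        IsUnit ((fun p : ZMod (2^d) × ZMod (2^d) => f p.1 + f p.2 * ρ) p) ↔ IsUnit (p.1 + 1 * p.2) := by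
      intro p
      rw [one_mul]
      have hE : f p.1 + f p.2 * ρ = (((p.1.val:ℤ)):R) + ((p.2.val:ℤ):R) * ρ := by
        rw [hfval, hfval]
      have hcast : (((p.1.val:ℤ) + (p.2.val:ℤ) : ℤ) : ZMod (2^d)) = p.1 + p.2 := by
        push_cast
        rw [ZMod.natCast_rightInverse p.1, ZMod.natCast_rightInverse p.2]
      simp only [hE]
      rw [hunit_iff]
      constructor
      · intro h
        have h2 := zmod_isUnit_of_not_dvd (ℓ := 2) d hℓ h
        rwa [hcast] at h2
      · intro h
        refine not_dvd_of_zmod_isUnit (ℓ := 2) hℓ hd ?_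
        rwa [hcast]
    have hcardu : Nat.card Rˣ = (2^d).totient * 2^d := count_units_aux E 1 hcrit
    refine core_assemble hℓ hd f hcardu hinjU ?_
    intro hd2
    have h2d0 : ((2:R))^d = 0 := by
      have h5 := hpow0
      push_cast at h5
      exact h5
    have hexpmain : ∀ u : Rˣ, u ^ 2 ^ (d-1) ∈ (Units.map f.toMonoidHom).range := by
      intro u
      obtain ⟨x, y, hxy⟩ := hrep (u : R)
      have hodd : ¬(2:ℤ)∣(x+y) := by
        intro hdd
        exact hnotunit x y hdd (hxy ▸ u.isUnit)
      obtain ⟨A, B, hA, hAB⟩ := pow2 (d-2) x y hodd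
      have hd12 : (d-2)+1 = d-1 := by omega
      rw [hd12] at hAB
      have hval : ((u ^ 2^(d-1) : Rˣ) : R) = (A:R) := by
        rw [Units.val_pow_eq_pow_val, hxy, hAB]
        have hz : ((2^((d-2)+2)*B : ℤ) : R) = 0 := by
          have h1 : ((d-2)+2) = d := by omega
          rw [h1]
          push_cast
          rw [h2d0, zero_mul]
        rw [hz, zero_mul, add_zero]
      exact mem_range_of _ A hA hval
    constructor
    · -- element of order 2^(d-1)
      have h3 : ¬ (2:ℤ) ∣ (1^2 - c*2^2) := by omega
      have hu0 : IsUnit ((1:R) + (2:R)*ρ) := by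
        have h4 := hunit_of_N 1 2 h3
        push_cast at h4
        exact h4
      refine ⟨QuotientGroup.mk hu0.unit, ?_⟩
      haveI : Fact (Nat.Prime 2) := ⟨hℓ⟩
      have hd21 : (d-2)+1 = d-1 := by omega
      rw [← hd21]
      apply orderOf_eq_prime_pow
      · intro h1
        have hmem : hu0.unit ^ 2^(d-2) ∈ (Units.map f.toMonoidHom).range := by
          rw [← QuotientGroup.eq_one_iff]
          rw [← h1]
          rfl
        obtain ⟨n, hn⟩ := range_val _ hmem
        obtain ⟨A, B, hA, hB, hAB⟩ := ord2 (d-2)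
        rw [Units.val_pow_eq_pow_val, hu0.unit_spec, hAB] at hn
        have h0 : ((A - n : ℤ):R) + ((2^(d-2+1)*B : ℤ):R)*ρ = 0 := by
          push_cast at hn ⊢
          linear_combination hn
        have h2'' := (huniq _ _ h0).2
        have h2 : (2:ℤ)^d ∣ 2^(d-2+1)*B := by exact_mod_cast h2''
        have hpowsplit : (2:ℤ)^d = 2^(d-2+1) * 2 := by
          rw [← pow_succ]
          congr 1
          omega
        rw [hpowsplit] at h2
        have h2ne : ((2:ℤ)^(d-2+1)) ≠ 0 := pow_ne_zero _ two_ne_zero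
        have hdvdB : (2:ℤ) ∣ B := (mul_dvd_mul_iff_left h2ne).1 h2
        exact hB hdvdB
      · rw [hd21]
        have : ((hu0.unit ^ 2 ^ (d-1) : Rˣ) : Rˣ ⧸ (Units.map f.toMonoidHom).range) = 1 :=
          (QuotientGroup.eq_one_iff _).2 (hexpmain hu0.unit)
        rw [← this]
        rfl
    · exact hexpmain

  · subst hl
    have hprime3 : Prime (3:ℤ) := Int.prime_iff_natAbs_prime.mpr (by norm_num)
    have hc3 : (3:ℤ) ∣ c := by omega
    obtain ⟨q, hq⟩ : ∃ q, c = 9*q + 6 := ⟨c/9, by omega⟩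
    have hsq : ∀ x : ℤ, ¬(3:ℤ)∣x → ¬(3:ℤ)∣x^2 := fun x hx hd' => hx (hprime3.dvd_of_dvd_pow hd')
    have hcube : ∀ x : ℤ, ¬(3:ℤ)∣x → ¬(3:ℤ)∣x^3 := fun x hx hd' => hx (hprime3.dvd_of_dvd_pow hd')
    have hnotunit : ∀ x y : ℤ, (3:ℤ)∣x → ¬ IsUnit ((x:R)+(y:R)*ρ) := by
      intro x y hx hU
      have h1 : (3:ℤ) ∣ (x^2 + c*y^2) := by
        have h2 : (3:ℤ)∣x^2 := dvd_pow hx (by norm_num)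
        have h3 : (3:ℤ)∣(c*y^2) := Dvd.dvd.mul_right hc3 _
        omega
      have h4 : (3:ℤ) ∣ 2*(x*y) := by
        have h5 : (3:ℤ) ∣ x*y := Dvd.dvd.mul_right hx y
        omega
      obtain ⟨A, hA⟩ := h1
      obtain ⟨B2, hB2⟩ := h4
      have hA' : ((x:R))^2 + (c:R)*((y:R))^2 = 3*(A:R) := by
        have := congrArg (fun z : ℤ => (z : R)) hA
        push_cast at this
        linear_combination this
      have hB' : 2*((x:R)*(y:R)) = 3*(B2:R) := by
        have := congrArg (fun z : ℤ => (z : R)) hB2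
        push_cast at this
        linear_combination this
      have hz2 : ((x:R)+(y:R)*ρ)^2 = 3 * ((A:R) + (B2:R) * ρ) := by
        push_cast
        linear_combination ((y:R)^2) * hρ + hA' + ρ * hB'
      have h3d0 : ((3:R))^d = 0 := by
        have h5 := hpow0
        push_cast at h5
        exact h5
      have hnil : IsNilpotent ((x:R)+(y:R)*ρ) := ⟨2*d, by rw [pow_mul, hz2, mul_pow, h3d0, zero_mul]⟩
      exact hnil.not_isUnit hU
    have hunit_iff3 : ∀ x y : ℤ, IsUnit ((x:R)+(y:R)*ρ) ↔ ¬(3:ℤ)∣x := by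
      intro x y
      constructor
      · intro h hx; exact hnotunit x y hx h
      · intro hx
        apply hunit_of_N
        have h2 := hsq x hx
        have h3 : (3:ℤ)∣(c*y^2) := Dvd.dvd.mul_right hc3 _
        omega
    have key3 : ∀ x y : ℤ, ((x:R)+(y:R)*ρ)^3
        = ((x^3 + 3*c*x*y^2 : ℤ):R) + ((3*x^2*y + c*y^3 : ℤ):R)*ρ := by
      intro x y
      push_cast
      linear_combination (3*(x:R)*(y:R)^2 + (y:R)^3*ρ) * hρ
    have step3 : ∀ (x y : ℤ) (k : ℕ), ((x:R) + ((3^(k+1)*y : ℤ):R)*ρ)^3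
        = ((x^3 + 3*c*3^(2*k+2)*x*y^2 : ℤ):R) + ((3^(k+2)*(x^2*y + 3^(2*k+1)*c*y^3) : ℤ):R)*ρ := by
      intro x y k
      push_cast
      linear_combination ((3:R)*(x:R)*((3:R)^(k+1)*(y:R))^2 + ((3:R)^(k+1)*(y:R))^3*ρ) * hρ
    have base3 : ∀ x y : ℤ, ¬(3:ℤ)∣x →
        ∃ B : ℤ, 3*x^2*y + c*y^3 = 9*B ∧ (¬(3:ℤ)∣(x^3 + 3*c*x*y^2)) := by
      intro x y hx
      have hz3 : ((x^2*y + 2*y^3 : ℤ) : ZMod 3) = 0 := by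
        have hx3 : ((x : ZMod 3)) ≠ 0 := by
          rw [Ne, ZMod.intCast_zmod_eq_zero_iff_dvd]
          exact_mod_cast hx
        push_cast
        revert hx3
        generalize ((x:ZMod 3)) = a
        generalize ((y:ZMod 3)) = b
        revert a b
        decide
      have h3dvd : (3:ℤ) ∣ (x^2*y + 2*y^3) := by
        have h6 := (ZMod.intCast_zmod_eq_zero_iff_dvd (x^2*y + 2*y^3) 3).1 hz3
        exact_mod_cast h6
      obtain ⟨w, hw⟩ := h3dvd
      refine ⟨w + q*y^3, by linear_combination 3*hw + y^3*hq, ?_⟩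
      have h1 := hcube x hx
      have h2 : (3:ℤ) ∣ 3*c*x*y^2 := ⟨c*x*y^2, by ring⟩
      omega
    have pow3 : ∀ k : ℕ, ∀ x y : ℤ, ¬(3:ℤ)∣x →
        ∃ A B : ℤ, (¬(3:ℤ)∣A) ∧ ((x:R)+(y:R)*ρ)^(3^(k+1)) = (A:R) + ((3^(k+2)*B : ℤ):R)*ρ := by
      intro k
      induction k with
      | zero =>
        intro x y hx
        obtain ⟨B, hB, hA⟩ := base3 x y hx
        refine ⟨x^3 + 3*c*x*y^2, B, hA, ?_⟩
        have hBc : (3*x^2*y + c*y^3 : ℤ) = 3^(0+2)*B := by rw [hB]; norm_num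
        rw [pow_one, key3, hBc]
      | succ k ih =>
        intro x y hx
        obtain ⟨A, B, hA, hAB⟩ := ih x y hx
        refine ⟨A^3 + 3*c*3^(2*(k+1)+2)*A*B^2, A^2*B + 3^(2*(k+1)+1)*c*B^3, ?_, ?_⟩
        · have h1 := hcube A hA
          have h2 : (3:ℤ) ∣ 3*c*3^(2*(k+1)+2)*A*B^2 := ⟨c*3^(2*(k+1)+2)*A*B^2, by ring⟩
          omega
        · have hh : (3:ℕ)^(k+1+1) = 3^(k+1) * 3 := by ring
          rw [hh, pow_mul, hAB]
          exact step3 A B (k+1)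
    have ord3 : ∀ k : ℕ, ∃ A B : ℤ, (¬(3:ℤ)∣A) ∧ (¬(3:ℤ)∣B) ∧
        ((1:R)+(3:R)*ρ)^(3^k) = (A:R) + ((3^(k+1)*B : ℤ):R)*ρ := by
      intro k
      induction k with
      | zero =>
        refine ⟨1, 1, by norm_num, by norm_num, ?_⟩
        push_cast
        ring
      | succ k ih =>
        obtain ⟨A, B, hA, hB, hAB⟩ := ih
        refine ⟨A^3 + 3*c*3^(2*k+2)*A*B^2, A^2*B + 3^(2*k+1)*c*B^3, ?_, ?_, ?_⟩
        · have h1 := hcube A hA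
          have h2 : (3:ℤ) ∣ 3*c*3^(2*k+2)*A*B^2 := ⟨c*3^(2*k+2)*A*B^2, by ring⟩
          omega
        · have h1 : ¬(3:ℤ)∣A^2*B := by
            intro hd'
            rcases hprime3.dvd_mul.1 hd' with h4|h4
            exacts [hsq A hA h4, hB h4]
          have h2 : (3:ℤ) ∣ 3^(2*k+1)*c*B^3 := ⟨3^(2*k)*c*B^3, by ring⟩
          omega
        · have hh : (3:ℕ)^(k+1) = 3^k * 3 := by ring
          rw [hh, pow_mul, hAB]
          exact step3 A B k
    have hcrit : ∀ p : ZMod (3^d) × ZMod (3^d),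
        IsUnit ((fun p : ZMod (3^d) × ZMod (3^d) => f p.1 + f p.2 * ρ) p) ↔ IsUnit (p.1 + 0 * p.2) := by
      intro p
      rw [zero_mul, add_zero]
      have hE : f p.1 + f p.2 * ρ = (((p.1.val:ℤ)):R) + ((p.2.val:ℤ):R) * ρ := by
        rw [hfval, hfval]
      have hcast : (((p.1.val:ℤ)) : ZMod (3^d)) = p.1 := by
        push_cast
        rw [ZMod.natCast_rightInverse p.1]
      simp only [hE]
      rw [hunit_iff3]
      constructor
      · intro h
        have h2 := zmod_isUnit_of_not_dvd (ℓ := 3) d hℓ h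
        rwa [hcast] at h2
      · intro h
        refine not_dvd_of_zmod_isUnit (ℓ := 3) hℓ hd ?_
        rwa [hcast]
    have hcardu : Nat.card Rˣ = (3^d).totient * 3^d := count_units_aux E 0 hcrit
    refine core_assemble hℓ hd f hcardu hinjU ?_
    intro hd2
    have h3d0 : ((3:R))^d = 0 := by
      have h5 := hpow0
      push_cast at h5
      exact h5
    have hexpmain : ∀ u : Rˣ, u ^ 3 ^ (d-1) ∈ (Units.map f.toMonoidHom).range := by
      intro u
      obtain ⟨x, y, hxy⟩ := hrep (u : R)
      have hx : ¬(3:ℤ)∣x := by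
        intro hdd
        exact hnotunit x y hdd (hxy ▸ u.isUnit)
      obtain ⟨A, B, hA, hAB⟩ := pow3 (d-2) x y hx
      have hd12 : (d-2)+1 = d-1 := by omega
      rw [hd12] at hAB
      have hval : ((u ^ 3^(d-1) : Rˣ) : R) = (A:R) := by
        rw [Units.val_pow_eq_pow_val, hxy, hAB]
        have hz : ((3^((d-2)+2)*B : ℤ) : R) = 0 := by
          have h1 : ((d-2)+2) = d := by omega
          rw [h1]
          push_cast
          rw [h3d0, zero_mul]
        rw [hz, zero_mul, add_zero]
      exact mem_range_of _ A hA hval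
    constructor
    · have h3 : ¬ (3:ℤ) ∣ (1^2 - c*3^2) := by omega
      have hu0 : IsUnit ((1:R) + (3:R)*ρ) := by
        have h4 := hunit_of_N 1 3 h3
        push_cast at h4
        exact h4
      refine ⟨QuotientGroup.mk hu0.unit, ?_⟩
      haveI : Fact (Nat.Prime 3) := ⟨hℓ⟩
      have hd21 : (d-2)+1 = d-1 := by omega
      rw [← hd21]
      apply orderOf_eq_prime_pow
      · intro h1
        have hmem : hu0.unit ^ 3^(d-2) ∈ (Units.map f.toMonoidHom).range := by
          rw [← QuotientGroup.eq_one_iff, ← h1]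
          rfl
        obtain ⟨n, hn⟩ := range_val _ hmem
        obtain ⟨A, B, hA, hB, hAB⟩ := ord3 (d-2)
        rw [Units.val_pow_eq_pow_val, hu0.unit_spec, hAB] at hn
        have h0 : ((A - n : ℤ):R) + ((3^(d-2+1)*B : ℤ):R)*ρ = 0 := by
          push_cast at hn ⊢
          linear_combination hn
        have h2'' := (huniq _ _ h0).2
        have h2 : (3:ℤ)^d ∣ 3^(d-2+1)*B := by exact_mod_cast h2''
        have hpowsplit : (3:ℤ)^d = 3^(d-2+1) * 3 := by
          rw [← pow_succ]
          congr 1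
          omega
        rw [hpowsplit] at h2
        have h2ne : ((3:ℤ)^(d-2+1)) ≠ 0 := pow_ne_zero _ (by norm_num)
        exact hB ((mul_dvd_mul_iff_left h2ne).1 h2)
      · rw [hd21]
        have hq1 : ((hu0.unit ^ 3 ^ (d-1) : Rˣ) : Rˣ ⧸ (Units.map f.toMonoidHom).range) = 1 :=
          (QuotientGroup.eq_one_iff _).2 (hexpmain hu0.unit)
        rw [← hq1]
        rfl
    · exact hexpmain

set_option maxHeartbeats 1600000 in
set_option synthInstance.maxHeartbeats 400000 in
/-- Let `ℓ` be a prime, `K` an imaginary quadratic field in which `ℓ` is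
ramified, and `d ≥ 1`.  Assume `ℓ = 2` and `D_K ≡ 12 (mod 16)`, or `ℓ = 3` and
`D_K ≡ 6 (mod 9)`.  Then `λ_d`, the cokernel of the natural map
`(ℤ/ℓ^dℤ)ˣ → (O_K/ℓ^dO_K)ˣ`, is isomorphic to `ℤ/ℓ^{d−1}ℤ × ℤ/ℓℤ`. -/
theorem lambda_d_of_ramified_special
    {K : Type*} [Field K] [NumberField K]
    (hdeg : Module.finrank ℚ K = 2) (hneg : NumberField.discr K < 0)
    (ℓ : ℕ) (hℓ : ℓ.Prime)
    (hram : ∃ P : Ideal (𝓞 K), P.IsPrime ∧ Ideal.span {(ℓ : 𝓞 K)} = P ^ 2)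
    (hcase : (ℓ = 2 ∧ NumberField.discr K % 16 = 12) ∨
             (ℓ = 3 ∧ NumberField.discr K % 9 = 6))
    (d : ℕ) (hd : 1 ≤ d)
    (f : ZMod (ℓ ^ d) →+* (𝓞 K ⧸ Ideal.span {(ℓ : 𝓞 K) ^ d})) :
    Nonempty
      (((𝓞 K ⧸ Ideal.span {(ℓ : 𝓞 K) ^ d})ˣ ⧸ (Units.map f.toMonoidHom).range) ≃*
        Multiplicative (ZMod (ℓ ^ (d - 1)) × ZMod ℓ)) := by
  have hrank : Module.finrank ℤ (𝓞 K) = 2 := by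
    rw [NumberField.RingOfIntegers.rank, hdeg]
  have hcardidx : Fintype.card (Module.Free.ChooseBasisIndex ℤ (𝓞 K)) = 2 := by
    rw [← Module.finrank_eq_card_chooseBasisIndex, hrank]
  let b : Module.Basis (Fin 2) ℤ (𝓞 K) :=
    (Module.Free.chooseBasis ℤ (𝓞 K)).reindex (Fintype.equivFinOfCardEq hcardidx)
  set c0 : ℤ := b.repr 1 0 with hc0def
  set c1 : ℤ := b.repr 1 1 with hc1def
  have hone : c0 • b 0 + c1 • b 1 = 1 := by
    have h := Module.Basis.sum_repr b 1
    rwa [Fin.sum_univ_two] at h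
  -- gcd of c0 c1 is 1
  have hg1 : Int.gcd c0 c1 = 1 := by
    set g : ℕ := Int.gcd c0 c1 with hgdef
    have hgz : g ≠ 0 := by
      intro h0
      rw [hgdef, Int.gcd_eq_zero_iff] at h0
      obtain ⟨h1, h2⟩ := h0
      rw [h1, h2] at hone
      simp at hone
    obtain ⟨e0, he0⟩ : ((g:ℤ)) ∣ c0 := Int.gcd_dvd_left _ _
    obtain ⟨e1, he1⟩ : ((g:ℤ)) ∣ c1 := Int.gcd_dvd_right _ _
    have hunit : IsUnit (((g:ℤ) : 𝓞 K)) := by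
      apply IsUnit.of_mul_eq_one (e0 • b 0 + e1 • b 1)
      have hmul : (((g:ℤ)) : 𝓞 K) * (e0 • b 0 + e1 • b 1)
          = ((g:ℤ)*e0) • b 0 + ((g:ℤ)*e1) • b 1 := by
        rw [mul_add, ← zsmul_eq_mul, ← zsmul_eq_mul, smul_smul, smul_smul]
      rw [hmul, ← he0, ← he1, hone]
    have hnorm : IsUnit (Algebra.norm ℤ (((g:ℤ)) : 𝓞 K)) := hunit.map (Algebra.norm ℤ)
    have hcardidx' : Fintype.card (Fin 2) = 2 := by simp
    have halg : (((g:ℤ)) : 𝓞 K) = algebraMap ℤ (𝓞 K) ((g:ℤ)) := by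
      rw [algebraMap_int_eq]
      rfl
    rw [halg, Algebra.norm_algebraMap_of_basis b] at hnorm
    rw [hcardidx'] at hnorm
    rcases Int.isUnit_iff.1 hnorm with h1 | h1
    · have : (g:ℤ) = 1 := by nlinarith [sq_nonneg ((g:ℤ) - 1), sq_nonneg ((g:ℤ) + 1)]
      exact_mod_cast this
    · exfalso
      nlinarith [sq_nonneg ((g:ℤ))]
  obtain ⟨p, q', hpq⟩ : IsCoprime c0 c1 := Int.isCoprime_iff_gcd_eq_one.2 hg1
  -- ω and new basis
  set ω : 𝓞 K := (-q') • b 0 + p • b 1 with hωdef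
  let L : 𝓞 K →ₗ[ℤ] 𝓞 K := b.constr ℤ ![(1 : 𝓞 K), ω]
  let L' : 𝓞 K →ₗ[ℤ] 𝓞 K := b.constr ℤ ![p • b 0 - c1 • b 1, q' • b 0 + c0 • b 1]
  have hL0 : L (b 0) = 1 := by simp [L, Module.Basis.constr_basis]
  have hL1 : L (b 1) = ω := by simp [L, Module.Basis.constr_basis]
  have hL'0 : L' (b 0) = p • b 0 - c1 • b 1 := by simp [L', Module.Basis.constr_basis]
  have hL'1 : L' (b 1) = q' • b 0 + c0 • b 1 := by simp [L', Module.Basis.constr_basis]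
  have hLL' : L.comp L' = LinearMap.id := by
    apply b.ext
    intro i
    fin_cases i
    · rw [LinearMap.comp_apply, LinearMap.id_apply]
      show L (L' (b 0)) = b 0
      rw [hL'0, map_sub, map_smul, map_smul, hL0, hL1, ← hone, hωdef]
      match_scalars
      · linear_combination hpq
      · ring
    · rw [LinearMap.comp_apply, LinearMap.id_apply]
      show L (L' (b 1)) = b 1
      rw [hL'1, map_add, map_smul, map_smul, hL0, hL1, ← hone, hωdef]
      match_scalars
      · ring
      · linear_combination hpq
  have hL'L : L'.comp L = LinearMap.id := by
    apply b.ext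
    intro i
    fin_cases i
    · rw [LinearMap.comp_apply, LinearMap.id_apply]
      show L' (L (b 0)) = b 0
      rw [hL0, ← hone, map_add, map_smul, map_smul, hL'0, hL'1]
      match_scalars
      · linear_combination hpq
      · ring
    · rw [LinearMap.comp_apply, LinearMap.id_apply]
      show L' (L (b 1)) = b 1
      rw [hL1, hωdef, map_add, map_smul, map_smul, hL'0, hL'1]
      match_scalars
      · ring
      · linear_combination hpq
  let e : 𝓞 K ≃ₗ[ℤ] 𝓞 K := LinearEquiv.ofLinear L L' hLL' hL'L
  let C : Module.Basis (Fin 2) ℤ (𝓞 K) := b.map e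
  have hC0 : C 0 = 1 := by
    rw [Module.Basis.map_apply]
    exact hL0
  have hC1 : C 1 = ω := by
    rw [Module.Basis.map_apply]
    exact hL1
  clear_value C
  -- multiplication structure
  set s : ℤ := C.repr (ω*ω) 0 with hsdef
  set t : ℤ := C.repr (ω*ω) 1 with htdef
  have hω2 : ω*ω = s • (1 : 𝓞 K) + t • ω := by
    have h := Module.Basis.sum_repr C (ω*ω)
    rw [Fin.sum_univ_two, hC0, hC1] at h
    exact h.symm
  have hω2' : ω^2 = (s : 𝓞 K) + (t : 𝓞 K) * ω := by
    rw [pow_two, hω2, zsmul_eq_mul, zsmul_eq_mul, mul_one]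
  -- coordinates
  have hrepr : ∀ α β : ℤ, C.repr ((α : 𝓞 K) + (β : 𝓞 K) * ω) 0 = α ∧
      C.repr ((α : 𝓞 K) + (β : 𝓞 K) * ω) 1 = β := by
    intro α β
    have h1 : (α : 𝓞 K) + (β : 𝓞 K) * ω = α • C 0 + β • C 1 := by
      rw [hC0, hC1, zsmul_eq_mul, zsmul_eq_mul, mul_one]
    rw [h1]
    constructor
    · simp only [map_add, map_smul, Module.Basis.repr_self, Finsupp.add_apply, Finsupp.smul_apply,
        Finsupp.single_apply, smul_eq_mul]
      rw [if_pos trivial, if_neg (show ¬(1:Fin 2) = 0 by decide)]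
      ring
    · simp only [map_add, map_smul, Module.Basis.repr_self, Finsupp.add_apply, Finsupp.smul_apply,
        Finsupp.single_apply, smul_eq_mul]
      rw [if_neg (show ¬(0:Fin 2) = 1 by decide), if_pos trivial]
      ring
  have hcoordeq : ∀ α β γ δ : ℤ, (α : 𝓞 K) + (β : 𝓞 K) * ω = (γ : 𝓞 K) + (δ : 𝓞 K) * ω →
      α = γ ∧ β = δ := by
    intro α β γ δ h
    constructor
    · rw [← (hrepr α β).1, ← (hrepr γ δ).1, h]
    · rw [← (hrepr α β).2, ← (hrepr γ δ).2, h]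
  have hdecomp : ∀ z : 𝓞 K, z = ((C.repr z 0 : ℤ) : 𝓞 K) + ((C.repr z 1 : ℤ) : 𝓞 K) * ω := by
    intro z
    have h := Module.Basis.sum_repr C z
    rw [Fin.sum_univ_two, hC0, hC1] at h
    conv_lhs => rw [← h]
    rw [zsmul_eq_mul, zsmul_eq_mul, mul_one]
  -- trace computations
  have htr1 : Algebra.trace ℤ (𝓞 K) 1 = 2 := by
    have h := Algebra.trace_algebraMap (R := ℤ) (S := 𝓞 K) (1:ℤ)
    rw [map_one] at h
    rw [h, hrank]
    norm_num
  have htrω : Algebra.trace ℤ (𝓞 K) ω = t := by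
    rw [Algebra.trace_eq_matrix_trace C]
    rw [Matrix.trace, Fin.sum_univ_two]
    have h0 : ((Algebra.leftMulMatrix C) ω).diag 0 = 0 := by
      show ((Algebra.leftMulMatrix C) ω) 0 0 = 0
      rw [Algebra.leftMulMatrix_eq_repr_mul, hC0, mul_one, ← hC1, Module.Basis.repr_self]
      simp [Finsupp.single_apply]
    have h1 : ((Algebra.leftMulMatrix C) ω).diag 1 = t := by
      show ((Algebra.leftMulMatrix C) ω) 1 1 = t
      rw [Algebra.leftMulMatrix_eq_repr_mul, hC1]
    rw [h0, h1, zero_add]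
  have htrω2 : Algebra.trace ℤ (𝓞 K) (ω*ω) = 2*s + t*t := by
    rw [hω2, map_add, map_smul, map_smul, htr1, htrω, smul_eq_mul, smul_eq_mul]
    ring
  have hdisc : NumberField.discr K = 4*s + t*t := by
    have h := NumberField.discr_eq_discr K C
    rw [← h, Algebra.discr_def, Matrix.det_fin_two]
    rw [Algebra.traceMatrix_apply, Algebra.traceMatrix_apply, Algebra.traceMatrix_apply,
      Algebra.traceMatrix_apply]
    rw [Algebra.traceForm_apply, Algebra.traceForm_apply, Algebra.traceForm_apply,
      Algebra.traceForm_apply]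
    rw [hC0, hC1, one_mul, mul_one, one_mul]
    rw [htr1, htrω, htrω2]
    ring
  -- clean up context to avoid heavy lets
  clear_value s t ω e L L'
  clear hω2 hL0 hL1 hL'0 hL'1 hLL' hL'L hone hpq hg1 htr1 htrω htrω2 hsdef htdef hωdef hc0def hc1def
  clear e L L' c0 c1 p q' b hcardidx
  -- case split
  set Q : 𝓞 K →+* (𝓞 K ⧸ Ideal.span {(ℓ : 𝓞 K) ^ d}) := Ideal.Quotient.mk _ with hQdef
  have hQsurj : Function.Surjective Q := Ideal.Quotient.mk_surjective
  have hQzero : ∀ z : 𝓞 K, ((ℓ : 𝓞 K) ^ d) ∣ z → Q z = 0 := by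
    intro z hz
    rw [hQdef]
    rw [Ideal.Quotient.eq_zero_iff_mem, Ideal.mem_span_singleton]
    exact hz
  have hQzero' : ∀ z : 𝓞 K, Q z = 0 → ((ℓ : 𝓞 K) ^ d) ∣ z := by
    intro z hz
    rw [hQdef, Ideal.Quotient.eq_zero_iff_mem, Ideal.mem_span_singleton] at hz
    exact hz
  rcases hcase with ⟨hl2, hD⟩ | ⟨hl3, hD⟩
  · -- ℓ = 2
    -- t is even
    have ht2 : ∃ t0 : ℤ, t = 2*t0 := by
      obtain ⟨D4, hD4⟩ : (4:ℤ) ∣ NumberField.discr K := by omega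
      have h4 : (4:ℤ) ∣ t*t := ⟨D4 - s, by linarith [hdisc, hD4]⟩
      by_contra h2
      push_neg at h2
      have hp2 : Prime (2:ℤ) := Int.prime_two
      have hnd : ¬ (2:ℤ) ∣ t*t := by
        intro hdd
        rcases hp2.dvd_mul.1 hdd with h|h <;>
          · obtain ⟨t0, ht0⟩ := h
            exact h2 t0 ht0
      exact hnd (dvd_trans ⟨2, by norm_num⟩ h4)
    obtain ⟨t0, ht0⟩ := ht2
    set cK : ℤ := s + t0*t0 with hcKdef
    have h4c : 4*cK = NumberField.discr K := by
      rw [hcKdef, hdisc, ht0]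
      ring
    have hc4 : cK % 4 = 3 := by omega
    set ω' : 𝓞 K := ω - (t0 : 𝓞 K) with hω'def
    set ρ := Q ω' with hρdef
    have hcast2 : ((t:ℤ) : 𝓞 K) = 2*((t0:ℤ) : 𝓞 K) := by
      rw [ht0]
      push_cast
      ring
    have hω'2 : ω'^2 = ((cK : ℤ) : 𝓞 K) := by
      rw [hω'def, hcKdef]
      push_cast
      linear_combination hω2' + ω * hcast2
    have hρ2 : ρ^2 = ((cK : ℤ) : (𝓞 K ⧸ Ideal.span {(ℓ : 𝓞 K) ^ d})) := by
      rw [hρdef, ← map_pow, hω'2, map_intCast]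
    have hrepR : ∀ r : (𝓞 K ⧸ Ideal.span {(ℓ : 𝓞 K) ^ d}), ∃ x y : ℤ,
        r = (x : _) + (y : _) * ρ := by
      intro r
      obtain ⟨z, rfl⟩ := hQsurj r
      set z0 : ℤ := C.repr z 0
      set z1 : ℤ := C.repr z 1
      refine ⟨z0 + z1*t0, z1, ?_⟩
      have hkey : z = ((z0 + z1*t0 : ℤ) : 𝓞 K) + ((z1:ℤ) : 𝓞 K) * ω' := by
        conv_lhs => rw [hdecomp z]
        rw [hω'def]
        push_cast
        ring
      rw [← map_intCast Q ((z0 + z1*t0 : ℤ)), ← map_intCast Q z1, hρdef, ← map_mul, ← map_add]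
      exact congrArg Q hkey
    have huniqR : ∀ x y : ℤ, (x : (𝓞 K ⧸ Ideal.span {(ℓ : 𝓞 K) ^ d})) + (y : _) * ρ = 0 →
        (((ℓ:ℕ):ℤ) ^ d ∣ x ∧ ((ℓ:ℕ):ℤ) ^ d ∣ y) := by
      intro x y h
      have h0 : Q ((x : 𝓞 K) + (y : 𝓞 K) * ω') = 0 := by
        rw [map_add, map_mul, map_intCast, map_intCast, ← hρdef]
        exact h
      obtain ⟨z, hz⟩ := hQzero' _ h0
      rw [hl2] at hz
      set z0 : ℤ := C.repr z 0
      set z1 : ℤ := C.repr z 1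
      have hzd : z = ((z0:ℤ) : 𝓞 K) + ((z1:ℤ) : 𝓞 K) * ω := hdecomp z
      have heq : ((x - t0*y : ℤ) : 𝓞 K) + ((y:ℤ) : 𝓞 K) * ω
          = ((2^d*z0 : ℤ) : 𝓞 K) + ((2^d*z1 : ℤ) : 𝓞 K) * ω := by
        have h2 : (x : 𝓞 K) + (y : 𝓞 K) * ω' = (((2:ℕ) : 𝓞 K))^d * z := hz
        rw [hω'def] at h2
        rw [hzd] at h2
        push_cast at h2 ⊢
        linear_combination h2
      obtain ⟨ha, hb⟩ := hcoordeq _ _ _ _ heq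
      rw [hl2]
      constructor
      · push_cast
        exact ⟨z0 + t0*z1, by linear_combination ha + t0*hb⟩
      · push_cast
        exact ⟨z1, hb⟩
    exact core hℓ hd f ρ cK hρ2 (Or.inl ⟨hl2, hc4⟩) hrepR huniqR
  · -- ℓ = 3
    set cK : ℤ := 4*s + t*t with hcKdef
    have hc9 : cK % 9 = 6 := by
      have h' := hD
      rw [hdisc] at h'
      exact h'
    set ω' : 𝓞 K := 2*ω - (t : 𝓞 K) with hω'def
    set ρ := Q ω' with hρdef
    have hω'2 : ω'^2 = ((cK : ℤ) : 𝓞 K) := by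
      rw [hω'def, hcKdef]
      push_cast
      linear_combination 4*hω2'
    have hρ2 : ρ^2 = ((cK : ℤ) : (𝓞 K ⧸ Ideal.span {(ℓ : 𝓞 K) ^ d})) := by
      rw [hρdef, ← map_pow, hω'2, map_intCast]
    obtain ⟨m, hm⟩ : Odd ((3:ℤ)^d) := Odd.pow ⟨1, by norm_num⟩
    set k : ℤ := m + 1 with hkdef
    have hk : 2*k = 3^d + 1 := by omega
    have hrepR : ∀ r : (𝓞 K ⧸ Ideal.span {(ℓ : 𝓞 K) ^ d}), ∃ x y : ℤ,
        r = (x : _) + (y : _) * ρ := by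
      intro r
      obtain ⟨z, rfl⟩ := hQsurj r
      set z0 : ℤ := C.repr z 0
      set z1 : ℤ := C.repr z 1
      refine ⟨z0 + t*(z1*k), z1*k, ?_⟩
      have hkcast : 2*((k:ℤ) : 𝓞 K) = (3 : 𝓞 K)^d + 1 := by
        have := congrArg (Int.cast : ℤ → 𝓞 K) hk
        simp only [Int.cast_mul, Int.cast_add, Int.cast_pow, Int.cast_one, Int.cast_ofNat] at this
        exact this
      have hkey : ((z0 + t*(z1*k) : ℤ) : 𝓞 K) + ((z1*k : ℤ) : 𝓞 K) * ω'
          = z + (3 : 𝓞 K)^d * (((z1:ℤ) : 𝓞 K) * ω) := by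
        conv_rhs => rw [hdecomp z]
        rw [hω'def]
        push_cast
        linear_combination (ω * ((z1:ℤ) : 𝓞 K)) * hkcast
      have hz3 : Q ((3 : 𝓞 K)^d * (((z1:ℤ) : 𝓞 K) * ω)) = 0 := by
        apply hQzero
        rw [hl3]
        push_cast
        exact Dvd.intro _ rfl
      rw [← map_intCast Q ((z0 + t*(z1*k) : ℤ)), ← map_intCast Q ((z1*k : ℤ)), hρdef,
        ← map_mul, ← map_add]
      rw [congrArg Q hkey, map_add, hz3, add_zero]
    have huniqR : ∀ x y : ℤ, (x : (𝓞 K ⧸ Ideal.span {(ℓ : 𝓞 K) ^ d})) + (y : _) * ρ = 0 →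
        (((ℓ:ℕ):ℤ) ^ d ∣ x ∧ ((ℓ:ℕ):ℤ) ^ d ∣ y) := by
      intro x y h
      have h0 : Q ((x : 𝓞 K) + (y : 𝓞 K) * ω') = 0 := by
        rw [map_add, map_mul, map_intCast, map_intCast, ← hρdef]
        exact h
      obtain ⟨z, hz⟩ := hQzero' _ h0
      rw [hl3] at hz
      set z0 : ℤ := C.repr z 0
      set z1 : ℤ := C.repr z 1
      have hzd : z = ((z0:ℤ) : 𝓞 K) + ((z1:ℤ) : 𝓞 K) * ω := hdecomp z
      have heq : ((x - t*y : ℤ) : 𝓞 K) + ((2*y:ℤ) : 𝓞 K) * ω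
          = ((3^d*z0 : ℤ) : 𝓞 K) + ((3^d*z1 : ℤ) : 𝓞 K) * ω := by
        have h2 : (x : 𝓞 K) + (y : 𝓞 K) * ω' = (((3:ℕ) : 𝓞 K))^d * z := hz
        rw [hω'def, hzd] at h2
        push_cast at h2 ⊢
        linear_combination h2
      obtain ⟨ha, hb⟩ := hcoordeq _ _ _ _ heq
      have hy : (3:ℤ)^d ∣ y := ⟨k*z1 - y, by linear_combination k*hb - y*hk⟩
      rw [hl3]
      constructor
      · push_cast
        obtain ⟨w, hw⟩ := hy
        exact ⟨z0 + t*w, by linear_combination ha + t*hw⟩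
      · push_cast
        exact hy
    exact core hℓ hd f ρ cK hρ2 (Or.inr ⟨hl3, hc9⟩) hrepR huniqR
end

section
/- Let K be an imaginary quadratic field, let O be an order in K of conductor m (i.e., of additive index m in O_K), and let n be a positive integer with gcd(m, n) = 1. Then the inclusion O ↪ O_K induces a ring isomorphism O/nO ≅ O_K/nO_K. -/
set_option synthInstance.maxHeartbeats 400000
set_option maxHeartbeats 800000
open NumberField

/-- Let `K` be an imaginary quadratic field, `O` an order in `K` of
conductor `m` (additive index `m` in `O_K`), and `n` a positive integer with
`gcd(m, n) = 1`.  Then the inclusion `O ↪ O_K` induces a ring isomorphism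
`O/nO ≅ O_K/nO_K`. -/
theorem order_quot_iso_ring_of_integers_quot
    {K : Type*} [Field K] [NumberField K]
    (hdeg : Module.finrank ℚ K = 2) (hneg : NumberField.discr K < 0)
    (O : Subring (𝓞 K)) (m : ℕ) (hm : O.toAddSubgroup.index = m) (hm0 : 0 < m)
    (n : ℕ) (hn : 0 < n) (hcop : Nat.Coprime m n) :
    ∃ φ : (↥O ⧸ Ideal.span {(n : ↥O)}) ≃+* (𝓞 K ⧸ Ideal.span {(n : 𝓞 K)}),
      ∀ x : ↥O, φ (Ideal.Quotient.mk (Ideal.span {(n : ↥O)}) x) =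
        Ideal.Quotient.mk (Ideal.span {(n : 𝓞 K)}) (x : 𝓞 K) := by
  classical
  obtain ⟨a, b, hab⟩ : IsCoprime (m : ℤ) (n : ℤ) := Int.isCoprime_iff_gcd_eq_one.mpr hcop
  have hmy : ∀ y : 𝓞 K, (m : ℤ) • y ∈ O := by
    intro y
    have := O.toAddSubgroup.nsmul_index_mem y
    rw [hm] at this
    simpa using this
  set I : Ideal ↥O := Ideal.span {(n : ↥O)} with hI
  set J : Ideal (𝓞 K) := Ideal.span {(n : 𝓞 K)} with hJ
  set f : ↥O →+* (𝓞 K ⧸ J) := (Ideal.Quotient.mk J).comp O.subtype with hf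
  have hfx : ∀ x : ↥O, f x = Ideal.Quotient.mk J (x : 𝓞 K) := fun x => rfl
  have key : ∀ y : 𝓞 K, y - (a * (m : ℤ)) • y = (n : 𝓞 K) * (b • y) := by
    intro y
    have h1 : (1 : ℤ) - a * m = b * n := by linarith
    calc y - (a * (m : ℤ)) • y = ((1 : ℤ) - a * m) • y := by rw [sub_smul, one_smul]
    _ = ((b * n : ℤ)) • y := by rw [h1]
    _ = (n : ℤ) • (b • y) := by rw [mul_comm b, mul_smul]
    _ = (n : 𝓞 K) * (b • y) := by rw [zsmul_eq_mul]; norm_cast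
  have hker : RingHom.ker f = I := by
    ext x
    rw [RingHom.mem_ker, hfx, Ideal.Quotient.eq_zero_iff_mem, hI, hJ,
      Ideal.mem_span_singleton, Ideal.mem_span_singleton]
    constructor
    · rintro ⟨z, hz⟩
      have h2 : z = (a * (m : ℤ)) • z + (n : 𝓞 K) * (b • z) := by
        rw [← key z]; abel
      have h3 : z = a • ((m : ℤ) • z) + b • ((x : 𝓞 K)) := by
        conv_lhs => rw [h2]
        rw [mul_smul, mul_smul_comm, ← hz]
      have hzO : z ∈ O := by
        rw [h3]
        exact O.toAddSubgroup.add_mem (O.toAddSubgroup.zsmul_mem (hmy z) a)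
          (O.toAddSubgroup.zsmul_mem x.2 b)
      exact ⟨⟨z, hzO⟩, Subtype.ext hz⟩
    · rintro ⟨z, hz⟩
      exact ⟨(z : 𝓞 K), congrArg Subtype.val hz⟩
  have hsurj : Function.Surjective f := by
    intro q
    obtain ⟨y, rfl⟩ := Ideal.Quotient.mk_surjective q
    refine ⟨a • ⟨(m : ℤ) • y, hmy y⟩, ?_⟩
    rw [hfx]
    have hcoe : ((a • (⟨(m : ℤ) • y, hmy y⟩ : ↥O) : ↥O) : 𝓞 K) = (a * (m : ℤ)) • y := by
      rw [mul_smul]; rfl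
    rw [hcoe, Ideal.Quotient.mk_eq_mk_iff_sub_mem]
    have h4 : (a * (m : ℤ)) • y - y = (n : 𝓞 K) * (-(b • y)) := by
      rw [mul_neg, ← key y]; abel
    rw [h4]
    exact Ideal.mem_span_singleton.mpr ⟨-(b • y), rfl⟩
  refine ⟨(Ideal.quotEquivOfEq hker.symm).trans (RingHom.quotientKerEquivOfSurjective hsurj),
    fun x => ?_⟩
  rfl
end

section
/- Let ℓ be a prime and K an imaginary quadratic field. For d ≥ 0 let λ_d be the cokernel of the natural homomorphism (ℤ/ℓ^dℤ)ˣ → (O_K/ℓ^dO_K)ˣ, let κ_d be the Sylow ℓ-subgroup of λ_d, and let π′_d : κ_{d+1} → κ_d be the (surjective) homomorphism induced by the reduction map (O_K/ℓ^{d+1}O_K)ˣ → (O_K/ℓ^dO_K)ˣ. Then ker π′_0 is cyclic of order ℓ if ℓ is ramified in O_K and trivial otherwise; and for every d ≥ 1, ker π′_d is cyclic of order ℓ. -/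
set_option synthInstance.maxHeartbeats 400000
set_option maxHeartbeats 800000

open NumberField

section AuxRing
variable {R S : Type*} [CommRing R] [CommRing S]

lemma units_map_surjective_aux (h : R →+* S) (hs : Function.Surjective h)
    (hker : ∀ x : R, h x = 0 → IsNilpotent x) :
    Function.Surjective (Units.map h.toMonoidHom) := by
  intro u
  obtain ⟨a, ha⟩ := hs u.val
  obtain ⟨b, hb⟩ := hs (↑u⁻¹ : S)
  have hn : IsNilpotent (a * b - 1) := by
    apply hker
    rw [map_sub, map_mul, ha, hb, map_one, u.mul_inv, sub_self]
  have hu : IsUnit (a * b) := by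
    have := hn.isUnit_one_add
    rwa [add_sub_cancel] at this
  have hua : IsUnit a := isUnit_of_mul_isUnit_left hu
  refine ⟨hua.unit, Units.ext ?_⟩
  have : h hua.unit.val = h a := congrArg h hua.unit_spec
  simpa [ha] using this

lemma card_units_mul_card (h : R →+* S) [Finite R]
    (hs : Function.Surjective h)
    (hker : ∀ x : R, h x = 0 → IsNilpotent x) :
    Nat.card Rˣ * Nat.card S = Nat.card Sˣ * Nat.card R := by
  haveI : Finite S := Finite.of_surjective h hs
  set φ := Units.map h.toMonoidHom with hφ
  have hφs : Function.Surjective φ := units_map_surjective_aux h hs hker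
  have h1 : Nat.card Rˣ = Nat.card Sˣ * Nat.card φ.ker := by
    have := Subgroup.card_eq_card_quotient_mul_card_subgroup (φ.ker)
    rwa [Nat.card_congr (QuotientGroup.quotientKerEquivOfSurjective φ hφs).toEquiv] at this
  set ψ := h.toAddMonoidHom with hψ
  have h2 : Nat.card R = Nat.card S * Nat.card ψ.ker := by
    have := AddSubgroup.card_eq_card_quotient_mul_card_addSubgroup (ψ.ker)
    have e : (R ⧸ ψ.ker) ≃+ S := QuotientAddGroup.quotientKerEquivOfSurjective ψ hs
    rwa [Nat.card_congr e.toEquiv] at this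
  have h3 : Nat.card φ.ker = Nat.card ψ.ker := by
    have hF : ∀ u : φ.ker, ((u.val : Rˣ) : R) - 1 ∈ ψ.ker := by
      intro u
      have h1' : ((φ u.val : Sˣ) : S) = 1 := by rw [u.2]; rfl
      have hval : h u.val.val = 1 := by simpa [φ] using h1'
      simp [ψ, AddMonoidHom.mem_ker, map_sub, hval]
    have hbij : Function.Bijective (fun u : φ.ker => (⟨u.val.val - 1, hF u⟩ : ψ.ker)) := by
      constructor
      · intro u v huv
        have h2' : (u.val.val : R) - 1 = v.val.val - 1 := congrArg Subtype.val huv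
        exact Subtype.ext (Units.ext (by linear_combination h2'))
      · rintro ⟨k, hk⟩
        have hk' : h k = 0 := hk
        have hn : IsNilpotent k := hker k hk'
        have hu : IsUnit (1 + k) := hn.isUnit_one_add
        have hmem : hu.unit ∈ φ.ker := by
          refine MonoidHom.mem_ker.mpr (Units.ext ?_)
          have : h (1 + k) = 1 := by rw [map_add, map_one, hk', add_zero]
          simpa [φ, hu.unit_spec] using this
        refine ⟨⟨hu.unit, hmem⟩, Subtype.ext ?_⟩
        show (hu.unit : R) - 1 = k
        rw [hu.unit_spec]; ring
    exact Nat.card_eq_of_bijective _ hbij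
  rw [h1, h2, h3]; ring
end AuxRing

section AuxGroup

lemma card_primary_subgroup {G : Type*} [Group G] [Finite G] (p : ℕ) [hp : Fact p.Prime]
    (κ : Subgroup G) (hκ : ∀ x : G, x ∈ κ ↔ ∃ n, orderOf x = p ^ n) :
    Nat.card κ = p ^ ((Nat.card G).factorization p) := by
  have hκp : IsPGroup p κ := by
    intro g
    obtain ⟨n, hn⟩ := (hκ g.val).mp g.2
    refine ⟨n, ?_⟩
    have : (g.val) ^ p ^ n = 1 := by rw [← hn]; exact pow_orderOf_eq_one _
    exact Subtype.ext (by simpa using this)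
  obtain ⟨a, ha⟩ := hκp.exists_card_eq
  obtain ⟨S⟩ := Sylow.nonempty (p := p) (G := G)
  have hS : (S : Subgroup G) ≤ κ := by
    intro x hx
    rw [hκ]
    obtain ⟨n, hn⟩ := S.2 ⟨x, hx⟩
    have : x ^ p ^ n = 1 := by
      have := congrArg (Subtype.val) hn
      simpa using this
    obtain ⟨m, _, hm⟩ := (Nat.dvd_prime_pow hp.1).mp (orderOf_dvd_of_pow_eq_one this)
    exact ⟨m, hm⟩
  have hd1 : p ^ ((Nat.card G).factorization p) ∣ Nat.card κ := by
    rw [← S.card_eq_multiplicity]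
    exact Subgroup.card_dvd_of_le hS
  have hd2 : Nat.card κ ∣ Nat.card G := Subgroup.card_subgroup_dvd_card κ
  have hG : Nat.card G ≠ 0 := Nat.card_pos.ne'
  rw [ha] at hd1 hd2 ⊢
  have h1 : (Nat.card G).factorization p ≤ a :=
    (Nat.pow_dvd_pow_iff_le_right hp.1.one_lt).mp hd1
  have h2 : a ≤ (Nat.card G).factorization p :=
    (Nat.Prime.pow_dvd_iff_le_factorization hp.1 hG).mp hd2
  rw [le_antisymm h2 h1]

lemma ker_card_of_surj {A B : Type*} [Group A] [Group B] [Finite A] (π : A →* B)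
    (hs : Function.Surjective π) :
    Nat.card A = Nat.card B * Nat.card π.ker := by
  have := Subgroup.card_eq_card_quotient_mul_card_subgroup (π.ker)
  rwa [Nat.card_congr (QuotientGroup.quotientKerEquivOfSurjective π hs).toEquiv] at this

lemma primary_surj {A B : Type*} [CommGroup A] [CommGroup B] [Finite A] (p : ℕ) (hp : p.Prime)
    (θ : A →* B) (hθ : Function.Surjective θ)
    (κA : Subgroup A) (hκA : ∀ x : A, x ∈ κA ↔ ∃ n, orderOf x = p ^ n)
    (κB : Subgroup B) (hκB : ∀ x : B, x ∈ κB ↔ ∃ n, orderOf x = p ^ n)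
    (π : κA →* κB) (hcoh : ∀ x : κA, ((π x : κB) : B) = θ (x : A)) :
    Function.Surjective π := by
  intro y
  obtain ⟨e, hey⟩ := (hκB _).mp y.2
  obtain ⟨x₀, hx₀⟩ := hθ (y : B)
  set a := (Nat.card A).factorization p with ha
  set b := (Nat.card A) / p ^ a with hb
  have hab : p ^ a * b = Nat.card A := Nat.ordProj_mul_ordCompl_eq_self _ p
  have hbd : ¬ p ∣ b := Nat.not_dvd_ordCompl hp Nat.card_pos.ne'
  have hx1 : (x₀ ^ b) ^ (p ^ a) = 1 := by
    rw [← pow_mul, mul_comm b, hab]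
    exact pow_card_eq_one'
  have hyp1 : (y : B) ^ (p ^ e) = 1 := by rw [← hey]; exact pow_orderOf_eq_one _
  by_cases h1 : p ^ e ≤ 1
  · have he1 : p ^ e = 1 := le_antisymm h1 (Nat.one_le_iff_ne_zero.mpr (pow_ne_zero _ hp.pos.ne'))
    have hy1 : (y : B) = 1 := orderOf_eq_one_iff.mp (by rw [hey, he1])
    refine ⟨1, Subtype.ext ?_⟩
    rw [map_one]
    exact (congrArg _ rfl).trans hy1.symm
  · push_neg at h1
    have hco : b.Coprime (p ^ e) := ((hp.coprime_iff_not_dvd).mpr hbd).symm.pow_right e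
    obtain ⟨c, -, hc⟩ := Nat.exists_mul_mod_eq_one_of_coprime hco h1
    have hmem : x₀ ^ (b * c) ∈ κA := by
      rw [hκA]
      have hdvd1 : orderOf (x₀ ^ (b * c)) ∣ p ^ a := by
        have h2 : orderOf (x₀ ^ b) ∣ p ^ a := orderOf_dvd_of_pow_eq_one hx1
        calc orderOf (x₀ ^ (b * c)) = orderOf ((x₀ ^ b) ^ c) := by rw [pow_mul]
        _ ∣ orderOf (x₀ ^ b) := orderOf_pow_dvd c
        _ ∣ p ^ a := h2
      obtain ⟨k, _, hk⟩ := (Nat.dvd_prime_pow hp).mp hdvd1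
      exact ⟨k, hk⟩
    refine ⟨⟨x₀ ^ (b * c), hmem⟩, Subtype.ext ?_⟩
    rw [hcoh]
    show θ (x₀ ^ (b * c)) = (y : B)
    rw [map_pow, hx₀]
    have hq : (y : B) ^ (b * c) = (y : B) ^ (p ^ e * (b * c / p ^ e) + b * c % p ^ e) := by
      rw [Nat.div_add_mod]
    rw [hq, hc, pow_add, pow_mul, hyp1, one_pow, one_mul, pow_one]

end AuxGroup

section AuxNF
variable {K : Type*} [Field K] [NumberField K]

lemma absnorm_card (I : Ideal (𝓞 K)) : Ideal.absNorm I = Nat.card (𝓞 K ⧸ I) := by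
  rw [Ideal.absNorm_apply, Submodule.cardQuot_apply]

lemma card_quot_pow (hdeg : Module.finrank ℚ K = 2) (ℓ m : ℕ) :
    Nat.card (𝓞 K ⧸ Ideal.span {(ℓ : 𝓞 K) ^ m}) = ℓ ^ (2 * m) := by
  have h1 : Ideal.absNorm (Ideal.span {(ℓ : 𝓞 K) ^ m})
      = Nat.card (𝓞 K ⧸ Ideal.span {(ℓ : 𝓞 K) ^ m}) := absnorm_card _
  rw [← h1, Ideal.absNorm_span_singleton]
  have hℓ : ((ℓ : 𝓞 K)) = algebraMap ℤ (𝓞 K) (ℓ : ℤ) := by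
    simp
  rw [map_pow, hℓ]
  have b := Module.Free.chooseBasis ℤ (𝓞 K)
  rw [Algebra.norm_algebraMap_of_basis b]
  have hrank : Module.finrank ℤ (𝓞 K) = 2 := by
    rw [NumberField.RingOfIntegers.rank, hdeg]
  rw [Module.finrank_eq_card_chooseBasisIndex] at hrank
  rw [hrank]
  rw [← pow_mul, Int.natAbs_pow]
  simp [mul_comm]

lemma natCast_dvd_natCast_of_dvd {a n : ℕ} (ha : 0 < a)
    (h : (a : 𝓞 K) ∣ (n : 𝓞 K)) : a ∣ n := by
  obtain ⟨z, hz⟩ := h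
  have hK : (n : K) = (a : K) * (algebraMap (𝓞 K) K z) := by
    have := congrArg (algebraMap (𝓞 K) K) hz
    push_cast at this ⊢
    simpa using this
  have haK : (a : K) ≠ 0 := by
    exact Nat.cast_ne_zero.mpr ha.ne'
  have hq : algebraMap ℚ K ((n : ℚ) / (a : ℚ)) = algebraMap (𝓞 K) K z := by
    rw [map_div₀, map_natCast, map_natCast, hK]
    field_simp
  have hint : IsIntegral ℤ ((n : ℚ) / (a : ℚ)) := by
    rw [← isIntegral_algebraMap_iff (algebraMap ℚ K).injective, hq]
    exact NumberField.RingOfIntegers.isIntegral_coe z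
  obtain ⟨y, hy⟩ := IsIntegrallyClosed.isIntegral_iff.mp hint
  have hyq : (y : ℚ) * a = n := by
    rw [show ((y : ℤ) : ℚ) = (n : ℚ) / (a : ℚ) from hy]
    field_simp
  have hyz : y * (a : ℤ) = (n : ℤ) := by exact_mod_cast hyq
  have : (a : ℤ) ∣ (n : ℤ) := Dvd.intro_left y hyz
  exact_mod_cast this

lemma f_inj (ℓ : ℕ) (hℓ : ℓ.Prime) (m : ℕ)
    (f : ZMod (ℓ ^ m) →+* (𝓞 K ⧸ Ideal.span {(ℓ : 𝓞 K) ^ m})) :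
    Function.Injective f := by
  haveI : NeZero (ℓ ^ m) := ⟨pow_ne_zero _ hℓ.pos.ne'⟩
  rw [injective_iff_map_eq_zero]
  intro a ha
  have h1 : ((a.val : ℕ) : ZMod (ℓ ^ m)) = a := ZMod.natCast_rightInverse a
  rw [← h1, map_natCast] at ha
  have h2 : ((a.val : ℕ) : 𝓞 K) ∈ Ideal.span {(ℓ : 𝓞 K) ^ m} := by
    rw [← Ideal.Quotient.eq_zero_iff_mem, map_natCast]
    exact ha
  have h3 : ((ℓ ^ m : ℕ) : 𝓞 K) ∣ ((a.val : ℕ) : 𝓞 K) := by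
    push_cast
    exact Ideal.mem_span_singleton.mp h2
  have h4 : ℓ ^ m ∣ a.val :=
    natCast_dvd_natCast_of_dvd (pow_pos hℓ.pos m) h3
  have h5 : a.val = 0 := Nat.eq_zero_of_dvd_of_lt h4 (ZMod.val_lt a)
  rw [← h1, h5, Nat.cast_zero]

lemma card_lambda (hdeg : Module.finrank ℚ K = 2) (ℓ : ℕ) (hℓ : ℓ.Prime) (m : ℕ) (hm : 1 ≤ m)
    (f : ZMod (ℓ ^ m) →+* (𝓞 K ⧸ Ideal.span {(ℓ : 𝓞 K) ^ m})) :
    (Nat.card ((𝓞 K ⧸ Ideal.span {(ℓ : 𝓞 K) ^ m})ˣ ⧸ (Units.map f.toMonoidHom).range)).factorization ℓ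
      = (m - 1) + (Nat.card (𝓞 K ⧸ Ideal.span {(ℓ : 𝓞 K) ^ 1})ˣ).factorization ℓ := by
  haveI : NeZero (ℓ ^ m) := ⟨pow_ne_zero _ hℓ.pos.ne'⟩
  haveI finm : Finite (𝓞 K ⧸ Ideal.span {(ℓ : 𝓞 K) ^ m}) :=
    Nat.finite_of_card_ne_zero (by rw [card_quot_pow hdeg]; exact (pow_pos hℓ.pos _).ne')
  haveI fin1 : Finite (𝓞 K ⧸ Ideal.span {(ℓ : 𝓞 K) ^ 1}) :=
    Nat.finite_of_card_ne_zero (by rw [card_quot_pow hdeg]; exact (pow_pos hℓ.pos _).ne')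
  have hle : Ideal.span {(ℓ : 𝓞 K) ^ m} ≤ Ideal.span {(ℓ : 𝓞 K) ^ 1} :=
    Ideal.span_singleton_le_span_singleton.mpr (pow_dvd_pow _ hm)
  set h := Ideal.Quotient.factor hle with hh
  have hs : Function.Surjective h := by
    intro b
    obtain ⟨y, rfl⟩ := Ideal.Quotient.mk_surjective b
    exact ⟨Ideal.Quotient.mk _ y, Ideal.Quotient.factor_mk hle y⟩
  have hker : ∀ x, h x = 0 → IsNilpotent x := by
    intro x hx
    obtain ⟨y, rfl⟩ := Ideal.Quotient.mk_surjective x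
    rw [Ideal.Quotient.factor_mk] at hx
    have hy : ((ℓ : 𝓞 K) ^ 1) ∣ y :=
      Ideal.mem_span_singleton.mp (Ideal.Quotient.eq_zero_iff_mem.mp hx)
    refine ⟨m, ?_⟩
    rw [← map_pow, Ideal.Quotient.eq_zero_iff_mem, Ideal.mem_span_singleton]
    calc (ℓ : 𝓞 K) ^ m = ((ℓ : 𝓞 K) ^ 1) ^ m := by ring
    _ ∣ y ^ m := pow_dvd_pow_of_dvd hy m
  set A := Nat.card ((𝓞 K ⧸ Ideal.span {(ℓ : 𝓞 K) ^ m})ˣ ⧸ (Units.map f.toMonoidHom).range) with hA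
  have eq1 : Nat.card (𝓞 K ⧸ Ideal.span {(ℓ : 𝓞 K) ^ m})ˣ
      = A * Nat.card (Units.map f.toMonoidHom).range :=
    Subgroup.card_eq_card_quotient_mul_card_subgroup _
  have hrange : Nat.card (Units.map f.toMonoidHom).range = (ℓ ^ m).totient := by
    have hinj : Function.Injective (Units.map f.toMonoidHom) :=
      Units.map_injective (f_inj ℓ hℓ m f)
    rw [← Nat.card_congr (MonoidHom.ofInjective hinj).toEquiv,
      Nat.card_eq_fintype_card, ZMod.card_units_eq_totient]
  have eq2 := card_units_mul_card h hs hker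
  rw [card_quot_pow hdeg ℓ m, card_quot_pow hdeg ℓ 1] at eq2
  have hA0 : A ≠ 0 := Nat.card_pos.ne'
  have hU0 : Nat.card (𝓞 K ⧸ Ideal.span {(ℓ : 𝓞 K) ^ m})ˣ ≠ 0 := Nat.card_pos.ne'
  have hU1 : Nat.card (𝓞 K ⧸ Ideal.span {(ℓ : 𝓞 K) ^ 1})ˣ ≠ 0 := Nat.card_pos.ne'
  have htot : (ℓ ^ m).totient ≠ 0 := Nat.totient_pos.mpr (pow_pos hℓ.pos m) |>.ne'
  have hv : ∀ {x y z : ℕ}, x ≠ 0 → y ≠ 0 → x * y = z →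
      x.factorization ℓ + y.factorization ℓ = z.factorization ℓ := by
    intro x y z hx hy hxy
    rw [← hxy, Nat.factorization_mul hx hy]; simp
  rw [hrange] at eq1
  have e1 := hv hA0 htot eq1.symm
  have e2 := hv hU0 ((pow_pos hℓ.pos (2*1)).ne') eq2
  have e2' := hv hU1 ((pow_pos hℓ.pos (2*m)).ne') rfl
  rw [← e2'] at e2
  have hpow : ∀ k : ℕ, ((ℓ:ℕ) ^ k).factorization ℓ = k := by
    intro k
    rw [hℓ.factorization_pow, Finsupp.single_eq_same]
  have htotf : ((ℓ ^ m).totient).factorization ℓ = m - 1 := by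
    rw [Nat.totient_prime_pow hℓ (by omega)]
    rw [← hv ((pow_pos hℓ.pos _).ne') (by have := hℓ.two_le; omega : ℓ - 1 ≠ 0) rfl, hpow,
      Nat.factorization_eq_zero_of_not_dvd (by
        intro hdvd
        have h2 := hℓ.two_le
        have := Nat.le_of_dvd (by omega) hdvd
        omega)]
    omega
  rw [htotf] at e1
  rw [hpow, hpow] at e2
  omega

lemma ramified_v1 (hdeg : Module.finrank ℚ K = 2) (ℓ : ℕ) (hℓ : ℓ.Prime)
    (P : Ideal (𝓞 K)) (hP : P.IsPrime) (hPsq : Ideal.span {(ℓ : 𝓞 K)} = P ^ 2) :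
    (Nat.card (𝓞 K ⧸ Ideal.span {(ℓ : 𝓞 K) ^ 1})ˣ).factorization ℓ = 1 := by
  have hsp : Ideal.span {(ℓ : 𝓞 K) ^ 1} = P ^ 2 := by rw [pow_one]; exact hPsq
  haveI fin1 : Finite (𝓞 K ⧸ Ideal.span {(ℓ : 𝓞 K) ^ 1}) :=
    Nat.finite_of_card_ne_zero (by rw [card_quot_pow hdeg]; exact (pow_pos hℓ.pos _).ne')
  have hcard1 : Nat.card (𝓞 K ⧸ Ideal.span {(ℓ : 𝓞 K) ^ 1}) = ℓ ^ 2 := by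
    rw [card_quot_pow hdeg]
  have hNP : Ideal.absNorm P = ℓ := by
    have h1 : Ideal.absNorm (Ideal.span {(ℓ : 𝓞 K) ^ 1}) = ℓ ^ 2 := by
      rw [absnorm_card, hcard1]
    rw [hsp, map_pow] at h1
    exact Nat.pow_left_injective two_ne_zero h1
  have hPbot : P ≠ ⊥ := by
    intro hbot
    have hne : (ℓ : 𝓞 K) ≠ 0 := Nat.cast_ne_zero.mpr hℓ.pos.ne'
    apply hne
    rw [← Ideal.span_singleton_eq_bot, hPsq, hbot, pow_two, Ideal.mul_bot]
  haveI hmax : P.IsMaximal := hP.isMaximal hPbot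
  letI : Field (𝓞 K ⧸ P) := Ideal.Quotient.field P
  haveI finP : Finite (𝓞 K ⧸ P) := Nat.finite_of_card_ne_zero (by
    rw [← absnorm_card, hNP]; exact hℓ.pos.ne')
  have hcardP : Nat.card (𝓞 K ⧸ P) = ℓ := by rw [← absnorm_card, hNP]
  have hcardPu : Nat.card (𝓞 K ⧸ P)ˣ = ℓ - 1 := by
    rw [Nat.card_units, hcardP]
  have hle : Ideal.span {(ℓ : 𝓞 K) ^ 1} ≤ P := by
    rw [hsp]; exact Ideal.pow_le_self two_ne_zero
  set h := Ideal.Quotient.factor hle with hh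
  have hs : Function.Surjective h := by
    intro b
    obtain ⟨y, rfl⟩ := Ideal.Quotient.mk_surjective b
    exact ⟨Ideal.Quotient.mk _ y, Ideal.Quotient.factor_mk hle y⟩
  have hker : ∀ x, h x = 0 → IsNilpotent x := by
    intro x hx
    obtain ⟨y, rfl⟩ := Ideal.Quotient.mk_surjective x
    rw [Ideal.Quotient.factor_mk] at hx
    have hy : y ∈ P := Ideal.Quotient.eq_zero_iff_mem.mp hx
    refine ⟨2, ?_⟩
    rw [← map_pow, Ideal.Quotient.eq_zero_iff_mem, hsp]
    exact Ideal.pow_mem_pow hy 2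
  have eq := card_units_mul_card h hs hker
  rw [hcardP, hcardPu, hcard1] at eq
  have hcu : Nat.card (𝓞 K ⧸ Ideal.span {(ℓ : 𝓞 K) ^ 1})ˣ = (ℓ - 1) * ℓ := by
    have : Nat.card (𝓞 K ⧸ Ideal.span {(ℓ : 𝓞 K) ^ 1})ˣ * ℓ = ((ℓ - 1) * ℓ) * ℓ := by
      rw [eq]; ring
    exact Nat.eq_of_mul_eq_mul_right hℓ.pos this
  have h2 := hℓ.two_le
  rw [hcu, Nat.factorization_mul (by omega) hℓ.pos.ne', Finsupp.add_apply,
    Nat.factorization_eq_zero_of_not_dvd (by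
      intro hdvd; have := Nat.le_of_dvd (by omega) hdvd; omega),
    hℓ.factorization, Finsupp.single_eq_same]

lemma unramified_v1 (hdeg : Module.finrank ℚ K = 2) (ℓ : ℕ) (hℓ : ℓ.Prime)
    (hur : ¬ ∃ P : Ideal (𝓞 K), P.IsPrime ∧ Ideal.span {(ℓ : 𝓞 K)} = P ^ 2) :
    ¬ ℓ ∣ Nat.card (𝓞 K ⧸ Ideal.span {(ℓ : 𝓞 K) ^ 1})ˣ := by
  haveI : Fact ℓ.Prime := ⟨hℓ⟩
  haveI fin1 : Finite (𝓞 K ⧸ Ideal.span {(ℓ : 𝓞 K) ^ 1}) :=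
    Nat.finite_of_card_ne_zero (by rw [card_quot_pow hdeg]; exact (pow_pos hℓ.pos _).ne')
  have hcard1 : Nat.card (𝓞 K ⧸ Ideal.span {(ℓ : 𝓞 K) ^ 1}) = ℓ ^ 2 := by
    rw [card_quot_pow hdeg]
  haveI ntv : Nontrivial (𝓞 K ⧸ Ideal.span {(ℓ : 𝓞 K) ^ 1}) :=
    Finite.one_lt_card_iff_nontrivial.mp (by
      rw [hcard1]; exact Nat.one_lt_pow two_ne_zero hℓ.one_lt)
  have hpone : Ideal.span {(ℓ : 𝓞 K)} = Ideal.span {(ℓ : 𝓞 K) ^ 1} := by rw [pow_one]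
  have hNI : Ideal.absNorm (Ideal.span {(ℓ : 𝓞 K)}) = ℓ ^ 2 := by
    rw [hpone, absnorm_card, hcard1]
  have hsq : Squarefree (Ideal.span {(ℓ : 𝓞 K)}) := by
    intro J hJ
    by_contra hJu
    have hJtop : J ≠ ⊤ := fun h => hJu (Ideal.isUnit_iff.mpr h)
    obtain ⟨M, hMmax, hleM⟩ := Ideal.exists_le_maximal J hJtop
    have hMd : M ∣ J := Ideal.dvd_iff_le.mpr hleM
    obtain ⟨C, hC⟩ := dvd_trans (mul_dvd_mul hMd hMd) hJ
    have hnorm := congrArg Ideal.absNorm hC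
    rw [hNI, map_mul, map_mul] at hnorm
    have hM1 : Ideal.absNorm M ≠ 1 := fun h => hMmax.ne_top (Ideal.absNorm_eq_one_iff.mp h)
    have hMdvd : Ideal.absNorm M ∣ ℓ := by
      refine (Nat.pow_dvd_pow_iff two_ne_zero).mp ⟨Ideal.absNorm C, ?_⟩
      rw [hnorm]; ring
    have hMℓ : Ideal.absNorm M = ℓ := (hℓ.eq_one_or_self_of_dvd _ hMdvd).resolve_left hM1
    rw [hMℓ] at hnorm
    have hC1 : Ideal.absNorm C = 1 := by
      have hpos : 0 < ℓ * ℓ := Nat.mul_pos hℓ.pos hℓ.pos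
      refine Nat.eq_of_mul_eq_mul_left hpos ?_
      rw [mul_one, ← hnorm]; ring
    have hCtop : C = ⊤ := Ideal.absNorm_eq_one_iff.mp hC1
    refine hur ⟨M, hMmax.isPrime, ?_⟩
    rw [hC, hCtop, Ideal.mul_top, pow_two]
  have hrad : IsRadical (Ideal.span {(ℓ : 𝓞 K)}) := hsq.isRadical
  intro hdvd
  have hch : ((ℓ : ℕ) : 𝓞 K ⧸ Ideal.span {(ℓ : 𝓞 K) ^ 1}) = 0 := by
    rw [← map_natCast (Ideal.Quotient.mk (Ideal.span {(ℓ : 𝓞 K) ^ 1})),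
      Ideal.Quotient.eq_zero_iff_mem, ← hpone]
    exact Ideal.mem_span_singleton_self _
  haveI := ringChar.charP (𝓞 K ⧸ Ideal.span {(ℓ : 𝓞 K) ^ 1})
  have hrc : ringChar (𝓞 K ⧸ Ideal.span {(ℓ : 𝓞 K) ^ 1}) ∣ ℓ :=
    (CharP.cast_eq_zero_iff _ _ ℓ).mp hch
  have hrc1 : ringChar (𝓞 K ⧸ Ideal.span {(ℓ : 𝓞 K) ^ 1}) ≠ 1 := by
    intro h1
    have hdd : ringChar (𝓞 K ⧸ Ideal.span {(ℓ : 𝓞 K) ^ 1}) ∣ 1 := by rw [h1]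
    have := (CharP.cast_eq_zero_iff (𝓞 K ⧸ Ideal.span {(ℓ : 𝓞 K) ^ 1}) _ 1).mpr hdd
    rw [Nat.cast_one] at this
    exact one_ne_zero this
  have hrceq : ringChar (𝓞 K ⧸ Ideal.span {(ℓ : 𝓞 K) ^ 1}) = ℓ :=
    (hℓ.eq_one_or_self_of_dvd _ hrc).resolve_left hrc1
  haveI hcp : CharP (𝓞 K ⧸ Ideal.span {(ℓ : 𝓞 K) ^ 1}) ℓ :=
    CharP.congr _ hrceq
  haveI : Fintype (𝓞 K ⧸ Ideal.span {(ℓ : 𝓞 K) ^ 1})ˣ := Fintype.ofFinite _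
  rw [Nat.card_eq_fintype_card] at hdvd
  obtain ⟨u, hu⟩ := exists_prime_orderOf_dvd_card ℓ hdvd
  have huℓ : u ^ ℓ = 1 := orderOf_dvd_iff_pow_eq_one.mp (by rw [hu])
  have hv : (u : 𝓞 K ⧸ Ideal.span {(ℓ : 𝓞 K) ^ 1}) ^ ℓ = 1 := by
    rw [← Units.val_pow_eq_pow_val, huℓ, Units.val_one]
  have hsub : ((u : 𝓞 K ⧸ Ideal.span {(ℓ : 𝓞 K) ^ 1}) - 1) ^ ℓ = 0 := by
    rw [sub_pow_char, hv, one_pow, sub_self]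
  obtain ⟨t, ht⟩ := Ideal.Quotient.mk_surjective ((u : 𝓞 K ⧸ Ideal.span {(ℓ : 𝓞 K) ^ 1}) - 1)
  have htl : t ^ ℓ ∈ Ideal.span {(ℓ : 𝓞 K)} := by
    rw [hpone, ← Ideal.Quotient.eq_zero_iff_mem, map_pow, ht]
    exact hsub
  have htI : t ∈ Ideal.span {(ℓ : 𝓞 K)} := by
    have h1 : Ideal.span {(ℓ : 𝓞 K)} ∣ Ideal.span {t} ^ ℓ := by
      rw [Ideal.span_singleton_pow]
      exact Ideal.dvd_span_singleton.mpr htl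
    exact Ideal.dvd_span_singleton.mp (hrad ℓ _ h1)
  have ht0 : (u : 𝓞 K ⧸ Ideal.span {(ℓ : 𝓞 K) ^ 1}) - 1 = 0 := by
    rw [← ht, Ideal.Quotient.eq_zero_iff_mem, ← hpone]
    exact htI
  have hu1 : u = 1 := Units.ext (by rw [Units.val_one]; linear_combination ht0)
  rw [hu1, orderOf_one] at hu
  exact hℓ.one_lt.ne' hu.symm

end AuxNF

/-- Let `ℓ` be a prime and `K` an imaginary quadratic field.  For
`m ≥ 0` let `λ_m` be the cokernel of the natural map `(ℤ/ℓ^mℤ)ˣ → (O_K/ℓ^mO_K)ˣ`,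
let `κ_m` be the Sylow `ℓ`-subgroup of `λ_m`, and let `π′_d : κ_{d+1} → κ_d` be the
homomorphism induced by the reduction map `O_K/ℓ^{d+1}O_K → O_K/ℓ^dO_K`.  Then
`ker π′_0` is cyclic of order `ℓ` if `ℓ` is ramified in `O_K` and trivial otherwise;
and for every `d ≥ 1`, `ker π′_d` is cyclic of order `ℓ`. -/
theorem ker_pi_prime_d
    {K : Type*} [Field K] [NumberField K]
    (hdeg : Module.finrank ℚ K = 2) (hneg : NumberField.discr K < 0)
    (ℓ : ℕ) (hℓ : ℓ.Prime) (d : ℕ)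
    (f : ∀ m : ℕ, ZMod (ℓ ^ m) →+* (𝓞 K ⧸ Ideal.span {(ℓ : 𝓞 K) ^ m}))
    (g : (𝓞 K ⧸ Ideal.span {(ℓ : 𝓞 K) ^ (d + 1)}) →+*
         (𝓞 K ⧸ Ideal.span {(ℓ : 𝓞 K) ^ d}))
    (hg : ∀ x : 𝓞 K,
      g (Ideal.Quotient.mk (Ideal.span {(ℓ : 𝓞 K) ^ (d + 1)}) x) =
        Ideal.Quotient.mk (Ideal.span {(ℓ : 𝓞 K) ^ d}) x)
    (κ : ∀ m : ℕ,
      Subgroup ((𝓞 K ⧸ Ideal.span {(ℓ : 𝓞 K) ^ m})ˣ ⧸ (Units.map (f m).toMonoidHom).range))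
    (hκ : ∀ m : ℕ,
      ∀ x : (𝓞 K ⧸ Ideal.span {(ℓ : 𝓞 K) ^ m})ˣ ⧸ (Units.map (f m).toMonoidHom).range,
        x ∈ κ m ↔ ∃ n : ℕ, orderOf x = ℓ ^ n)
    (π' : κ (d + 1) →* κ d)
    (hπ' : ∀ (x : κ (d + 1)) (u : (𝓞 K ⧸ Ideal.span {(ℓ : 𝓞 K) ^ (d + 1)})ˣ),
      (QuotientGroup.mk u :
          (𝓞 K ⧸ Ideal.span {(ℓ : 𝓞 K) ^ (d + 1)})ˣ ⧸ (Units.map (f (d + 1)).toMonoidHom).range) =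
        (x : (𝓞 K ⧸ Ideal.span {(ℓ : 𝓞 K) ^ (d + 1)})ˣ ⧸ (Units.map (f (d + 1)).toMonoidHom).range) →
      ((π' x : (𝓞 K ⧸ Ideal.span {(ℓ : 𝓞 K) ^ d})ˣ ⧸ (Units.map (f d).toMonoidHom).range)) =
        QuotientGroup.mk (Units.map g.toMonoidHom u)) :
    (d = 0 →
      ((∃ P : Ideal (𝓞 K), P.IsPrime ∧ Ideal.span {(ℓ : 𝓞 K)} = P ^ 2) →
        IsCyclic π'.ker ∧ Nat.card π'.ker = ℓ) ∧
      (¬ (∃ P : Ideal (𝓞 K), P.IsPrime ∧ Ideal.span {(ℓ : 𝓞 K)} = P ^ 2) →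
        π'.ker = ⊥)) ∧
    (1 ≤ d → IsCyclic π'.ker ∧ Nat.card π'.ker = ℓ) := by
  haveI : Fact ℓ.Prime := ⟨hℓ⟩
  haveI finq : ∀ m : ℕ, Finite (𝓞 K ⧸ Ideal.span {(ℓ : 𝓞 K) ^ m}) := fun m =>
    Nat.finite_of_card_ne_zero (by rw [card_quot_pow hdeg]; exact (pow_pos hℓ.pos _).ne')
  have hκcard : ∀ m : ℕ, 1 ≤ m → Nat.card (κ m) = ℓ ^ ((m - 1) +
      (Nat.card (𝓞 K ⧸ Ideal.span {(ℓ : 𝓞 K) ^ 1})ˣ).factorization ℓ) := by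
    intro m hm
    rw [card_primary_subgroup ℓ (κ m) (hκ m), card_lambda hdeg ℓ hℓ m hm (f m)]
  constructor
  · -- d = 0
    intro hd0
    subst hd0
    haveI hsR : Subsingleton (𝓞 K ⧸ Ideal.span {(ℓ : 𝓞 K) ^ 0}) := by
      refine subsingleton_of_zero_eq_one ?_
      have hmem : (1 : 𝓞 K) ∈ Ideal.span {(ℓ : 𝓞 K) ^ 0} := by
        rw [pow_zero]; exact Ideal.mem_span_singleton_self 1
      have h10 : (1 : 𝓞 K ⧸ Ideal.span {(ℓ : 𝓞 K) ^ 0}) = 0 := by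
        rw [← map_one (Ideal.Quotient.mk (Ideal.span {(ℓ : 𝓞 K) ^ 0}))]
        exact Ideal.Quotient.eq_zero_iff_mem.mpr hmem
      exact h10.symm
    haveI hsRu : Subsingleton (𝓞 K ⧸ Ideal.span {(ℓ : 𝓞 K) ^ 0})ˣ :=
      ⟨fun a b => Units.ext (Subsingleton.elim _ _)⟩
    haveI hslam : Subsingleton
        ((𝓞 K ⧸ Ideal.span {(ℓ : 𝓞 K) ^ 0})ˣ ⧸ (Units.map (f 0).toMonoidHom).range) := by
      constructor
      intro a b
      obtain ⟨x, rfl⟩ := QuotientGroup.mk_surjective a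
      obtain ⟨y, rfl⟩ := QuotientGroup.mk_surjective b
      rw [Subsingleton.elim x y]
    haveI hsκ : Subsingleton (κ 0) := ⟨fun a b => Subtype.ext (Subsingleton.elim _ _)⟩
    have hker_top : π'.ker = ⊤ :=
      (Subgroup.eq_top_iff' π'.ker).mpr fun x => Subsingleton.elim _ _
    have hkcard : Nat.card π'.ker = Nat.card (κ (0 + 1)) := by
      rw [hker_top]
      exact Subgroup.card_top
    constructor
    · rintro ⟨P, hP, hPsq⟩
      have hv1 := ramified_v1 hdeg ℓ hℓ P hP hPsq
      have hc : Nat.card π'.ker = ℓ := by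
        rw [hkcard, hκcard (0 + 1) le_rfl, hv1]
        norm_num
      exact ⟨isCyclic_of_prime_card hc, hc⟩
    · intro hur
      have hv0 : (Nat.card (𝓞 K ⧸ Ideal.span {(ℓ : 𝓞 K) ^ 1})ˣ).factorization ℓ = 0 :=
        Nat.factorization_eq_zero_of_not_dvd (unramified_v1 hdeg ℓ hℓ hur)
      have hc : Nat.card π'.ker = 1 := by
        rw [hkcard, hκcard (0 + 1) le_rfl, hv0]
        norm_num
      exact Subgroup.card_eq_one.mp hc
  · -- d ≥ 1
    intro hd
    -- the reduction map on units and quotients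
    have hgs : Function.Surjective g := by
      intro b
      obtain ⟨y, rfl⟩ := Ideal.Quotient.mk_surjective b
      exact ⟨Ideal.Quotient.mk _ y, hg y⟩
    have hgker : ∀ x, g x = 0 → IsNilpotent x := by
      intro x hx
      obtain ⟨y, rfl⟩ := Ideal.Quotient.mk_surjective x
      rw [hg] at hx
      have hy : ((ℓ : 𝓞 K) ^ d) ∣ y :=
        Ideal.mem_span_singleton.mp (Ideal.Quotient.eq_zero_iff_mem.mp hx)
      refine ⟨2, ?_⟩
      rw [← map_pow, Ideal.Quotient.eq_zero_iff_mem, Ideal.mem_span_singleton]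
      calc (ℓ : 𝓞 K) ^ (d + 1) ∣ (ℓ : 𝓞 K) ^ (2 * d) := pow_dvd_pow _ (by omega)
      _ = ((ℓ : 𝓞 K) ^ d) ^ 2 := by rw [← pow_mul, mul_comm]
      _ ∣ y ^ 2 := pow_dvd_pow_of_dvd hy 2
    have hgus : Function.Surjective (Units.map g.toMonoidHom) :=
      units_map_surjective_aux g hgs hgker
    have hcomp : g.comp (f (d + 1))
        = (f d).comp (ZMod.castHom (pow_dvd_pow ℓ (Nat.le_succ d)) (ZMod (ℓ ^ d))) :=
      RingHom.ext_zmod _ _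
    have hcomap : (Units.map (f (d + 1)).toMonoidHom).range ≤
        Subgroup.comap (Units.map g.toMonoidHom) (Units.map (f d).toMonoidHom).range := by
      rintro _ ⟨v, rfl⟩
      simp only [Subgroup.mem_comap]
      have hun : Units.map g.toMonoidHom ((Units.map (f (d + 1)).toMonoidHom) v)
          = Units.map ((f d).toMonoidHom)
              (Units.map (ZMod.castHom (pow_dvd_pow ℓ (Nat.le_succ d))
                (ZMod (ℓ ^ d))).toMonoidHom v) := by
        rw [← MonoidHom.comp_apply, ← Units.map_comp, ← MonoidHom.comp_apply, ← Units.map_comp]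
        have : g.toMonoidHom.comp (f (d + 1)).toMonoidHom
            = (f d).toMonoidHom.comp (ZMod.castHom (pow_dvd_pow ℓ (Nat.le_succ d))
                (ZMod (ℓ ^ d))).toMonoidHom := by
          have := congrArg RingHom.toMonoidHom hcomp
          exact this
        rw [this]
      rw [hun]
      exact ⟨_, rfl⟩
    set θ := QuotientGroup.map _ _ (Units.map g.toMonoidHom) hcomap with hθdef
    have hθs : Function.Surjective θ := by
      intro b
      obtain ⟨w, rfl⟩ := QuotientGroup.mk_surjective b
      obtain ⟨u, hu⟩ := hgus w
      exact ⟨QuotientGroup.mk u, by rw [hθdef, QuotientGroup.map_mk, hu]⟩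
    have hcoh : ∀ x : κ (d + 1),
        ((π' x : κ d) :
          (𝓞 K ⧸ Ideal.span {(ℓ : 𝓞 K) ^ d})ˣ ⧸ (Units.map (f d).toMonoidHom).range)
          = θ (x : (𝓞 K ⧸ Ideal.span {(ℓ : 𝓞 K) ^ (d + 1)})ˣ ⧸
              (Units.map (f (d + 1)).toMonoidHom).range) := by
      intro x
      obtain ⟨u, hu⟩ := QuotientGroup.mk_surjective
        (x : (𝓞 K ⧸ Ideal.span {(ℓ : 𝓞 K) ^ (d + 1)})ˣ ⧸
          (Units.map (f (d + 1)).toMonoidHom).range)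
      rw [hπ' x u hu, ← hu, hθdef, QuotientGroup.map_mk]
    have hsurj : Function.Surjective π' :=
      by
        refine primary_surj (A := (𝓞 K ⧸ Ideal.span {(ℓ : 𝓞 K) ^ (d + 1)})ˣ ⧸ (Units.map (f (d + 1)).toMonoidHom).range)
          (B := (𝓞 K ⧸ Ideal.span {(ℓ : 𝓞 K) ^ d})ˣ ⧸ (Units.map (f d).toMonoidHom).range)
          ℓ hℓ θ hθs (κ (d + 1)) (hκ (d + 1)) (κ d) (hκ d) π' ?_
        intro x
        exact hcoh x
    have hcards := ker_card_of_surj π' hsurj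
    set v := (Nat.card (𝓞 K ⧸ Ideal.span {(ℓ : 𝓞 K) ^ 1})ˣ).factorization ℓ with hvdef
    rw [hκcard (d + 1) (by omega), hκcard d hd] at hcards
    have hstep : ℓ ^ ((d + 1 - 1) + v) = ℓ ^ ((d - 1) + v) * ℓ := by
      rw [← pow_succ]
      congr 1
      omega
    rw [hstep] at hcards
    have hkerℓ : Nat.card π'.ker = ℓ :=
      (Nat.eq_of_mul_eq_mul_left (pow_pos hℓ.pos _) hcards.symm)
    exact ⟨isCyclic_of_prime_card hkerℓ, hkerℓ⟩
end
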